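/- arXiv:1502.00159 — 9 statements merged into one kernel-verified Lean document; each statement's English description precedes it below -/
import Mathlib

section
/- Let (X,μ) be a measure space, 0<p<∞, and Q a nonempty subset of (0,∞) with m_Q = inf Q > 0. Then IL_{p,Q}(X,μ) = L_{p,m_Q}(X,μ), and for every f ∈ L_{p,m_Q}(X,μ) one has ‖f‖_{L_{p,m_Q}} ≤ sup_{q∈Q} ‖f‖_{L_{p,q}} ≤ max{1, (m_Q/p)^{1/m_Q}} · ‖f‖_{L_{p,m_Q}}. -/
open MeasureTheory Set ENNReal Filter Topology

noncomputable section

variable {X : Type*} [MeasurableSpace X]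

/-- The distribution function `d_f(α) = μ {x : |f x| > α}`. -/
def distFun (μ : Measure X) (f : X → ℝ) (α : ℝ) : ℝ≥0∞ :=
  μ {x | α < |f x|}

/-- The decreasing rearrangement `f*(t) = inf {s > 0 : d_f(s) ≤ t}`, with `inf ∅ = ∞`. -/
def rearr (μ : Measure X) (f : X → ℝ) (t : ℝ) : ℝ≥0∞ :=
  ⨅ (s : ℝ) (_ : 0 < s ∧ distFun μ f s ≤ ENNReal.ofReal t), ENNReal.ofReal s

/-- The Lorentz quasi-norm `‖f‖_{L_{p,q}}` (for `q = ∞` the weak norm `sup_t t^{1/p} f*(t)`). -/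
def lorentzNorm (μ : Measure X) (f : X → ℝ) (p q : ℝ≥0∞) : ℝ≥0∞ :=
  if q = ∞ then ⨆ t ∈ Ioi (0 : ℝ), ENNReal.ofReal t ^ (1 / p).toReal * rearr μ f t
  else (∫⁻ t in Ioi (0 : ℝ),
      (ENNReal.ofReal t ^ (1 / p).toReal * rearr μ f t) ^ q.toReal / ENNReal.ofReal t) ^
      (1 / q.toReal)

/-- The Lorentz space `L_{p,q}(X, μ)`, as the set of measurable functions with
finite Lorentz quasi-norm. -/
def Lorentz (μ : Measure X) (p q : ℝ≥0∞) : Set (X → ℝ) :=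
  {f | Measurable f ∧ lorentzNorm μ f p q < ∞}

namespace LorentzAux

lemma rearr_antitone (μ : Measure X) (f : X → ℝ) : Antitone (rearr μ f) := by
  intro t1 t2 h
  exact le_iInf₂ fun s hs => iInf₂_le s ⟨hs.1, hs.2.trans (ENNReal.ofReal_le_ofReal h)⟩

lemma rearr_measurable (μ : Measure X) (f : X → ℝ) : Measurable (rearr μ f) :=
  (rearr_antitone μ f).measurable

/-- The Lorentz integral with real exponents. -/
def lint (μ : Measure X) (f : X → ℝ) (c e : ℝ) : ℝ≥0∞ :=
  ∫⁻ t in Ioi (0 : ℝ), (ENNReal.ofReal t ^ c * rearr μ f t) ^ e / ENNReal.ofReal t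

lemma meas_integrand (μ : Measure X) (f : X → ℝ) (c e : ℝ) :
    Measurable fun t : ℝ =>
      (ENNReal.ofReal t ^ c * rearr μ f t) ^ e / ENNReal.ofReal t :=
  (((ENNReal.measurable_ofReal.pow_const c).mul (rearr_measurable μ f)).pow_const e).div
    ENNReal.measurable_ofReal

lemma lorentzNorm_eq (μ : Measure X) (f : X → ℝ) (p : ℝ≥0∞) {q : ℝ≥0∞} (hq : q ≠ ∞) :
    lorentzNorm μ f p q = (lint μ f (1 / p).toReal q.toReal) ^ (1 / q.toReal) := by
  simp only [lorentzNorm, if_neg hq, lint]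

/-- The weak-type (Hardy) pointwise bound. -/
lemma weak_bound (μ : Measure X) (f : X → ℝ) {c e : ℝ} (hc : 0 < c) (he : 0 < e)
    {t : ℝ} (ht : 0 < t) :
    (ENNReal.ofReal t ^ c * rearr μ f t) ^ e ≤ ENNReal.ofReal (c * e) * lint μ f c e := by
  set R := rearr μ f with hRdef
  have hce : 0 < c * e := mul_pos hc he
  have hmeas : Measurable fun s : ℝ => ENNReal.ofReal (s ^ (c * e - 1)) :=
    ENNReal.measurable_ofReal.comp (measurable_id.pow_const _)
  have hint : ∫⁻ s in Ioc (0 : ℝ) t, ENNReal.ofReal (s ^ (c * e - 1)) =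
      ENNReal.ofReal (t ^ (c * e) / (c * e)) := by
    rw [← ofReal_integral_eq_lintegral_ofReal]
    · congr 1
      have h1 : ∫ s in Ioc (0 : ℝ) t, s ^ (c * e - 1) = ∫ s in (0 : ℝ)..t, s ^ (c * e - 1) :=
        (intervalIntegral.integral_of_le ht.le).symm
      rw [h1, integral_rpow (Or.inl (by linarith)), sub_add_cancel,
        Real.zero_rpow hce.ne', sub_zero]
    · exact (intervalIntegral.intervalIntegrable_rpow' (by linarith)).1
    · filter_upwards [ae_restrict_mem measurableSet_Ioc] with s hs
      exact Real.rpow_nonneg hs.1.le _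
  have key : R t ^ e * ENNReal.ofReal (t ^ (c * e) / (c * e)) ≤ lint μ f c e := by
    calc R t ^ e * ENNReal.ofReal (t ^ (c * e) / (c * e))
        = ∫⁻ s in Ioc (0 : ℝ) t, R t ^ e * ENNReal.ofReal (s ^ (c * e - 1)) := by
          rw [lintegral_const_mul _ hmeas, hint]
      _ ≤ ∫⁻ s in Ioc (0 : ℝ) t,
            (ENNReal.ofReal s ^ c * R s) ^ e / ENNReal.ofReal s := by
          refine setLIntegral_mono' measurableSet_Ioc fun s hs => ?_
          have hs0 : 0 < s := hs.1
          have hRle : R t ≤ R s := rearr_antitone μ f hs.2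
          have heq : (ENNReal.ofReal s ^ c * R s) ^ e / ENNReal.ofReal s
              = R s ^ e * ENNReal.ofReal (s ^ (c * e - 1)) := by
            rw [ENNReal.mul_rpow_of_nonneg _ _ he.le, ← ENNReal.rpow_mul,
              ENNReal.ofReal_rpow_of_pos hs0, mul_comm (ENNReal.ofReal (s ^ (c * e))),
              mul_div_assoc, ← ENNReal.ofReal_div_of_pos hs0]
            congr 2
            rw [Real.rpow_sub hs0, Real.rpow_one]
          rw [heq]
          exact mul_le_mul_left (ENNReal.rpow_le_rpow hRle he.le) _
      _ ≤ lint μ f c e := lintegral_mono_set Ioc_subset_Ioi_self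
  have hrw : (ENNReal.ofReal t ^ c * R t) ^ e
      = ENNReal.ofReal (c * e) * (R t ^ e * ENNReal.ofReal (t ^ (c * e) / (c * e))) := by
    rw [ENNReal.mul_rpow_of_nonneg _ _ he.le, ← ENNReal.rpow_mul,
      ENNReal.ofReal_rpow_of_pos ht, ← mul_assoc, mul_comm (ENNReal.ofReal (c * e)),
      mul_assoc, ← ENNReal.ofReal_mul hce.le, mul_div_cancel₀ _ hce.ne', mul_comm]
  rw [hrw]
  exact mul_le_mul_right key _

/-- The main integral comparison for `e ≤ e'`. -/
lemma lint_le (μ : Measure X) (f : X → ℝ) {c e e' : ℝ} (hc : 0 < c) (he : 0 < e)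
    (hee : e ≤ e') :
    lint μ f c e' ≤
      (ENNReal.ofReal (c * e) * lint μ f c e) ^ ((e' - e) / e) * lint μ f c e := by
  set W := (ENNReal.ofReal (c * e) * lint μ f c e) ^ (1 / e) with hWdef
  have hWb : ∀ t : ℝ, 0 < t → ENNReal.ofReal t ^ c * rearr μ f t ≤ W := by
    intro t ht
    have h1 := weak_bound μ f hc he ht
    calc ENNReal.ofReal t ^ c * rearr μ f t
        = ((ENNReal.ofReal t ^ c * rearr μ f t) ^ e) ^ (1 / e) := by
          rw [← ENNReal.rpow_mul, mul_one_div, div_self he.ne', ENNReal.rpow_one]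
      _ ≤ W := ENNReal.rpow_le_rpow h1 (by positivity)
  have hW : W ^ (e' - e) = (ENNReal.ofReal (c * e) * lint μ f c e) ^ ((e' - e) / e) := by
    rw [hWdef, ← ENNReal.rpow_mul, one_div_mul_eq_div]
  calc lint μ f c e'
      ≤ ∫⁻ t in Ioi (0 : ℝ),
          W ^ (e' - e) * ((ENNReal.ofReal t ^ c * rearr μ f t) ^ e / ENNReal.ofReal t) := by
        rw [lint]
        refine setLIntegral_mono' measurableSet_Ioi fun t ht => ?_
        have hsplit : (ENNReal.ofReal t ^ c * rearr μ f t) ^ e'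
            = (ENNReal.ofReal t ^ c * rearr μ f t) ^ (e' - e)
              * (ENNReal.ofReal t ^ c * rearr μ f t) ^ e := by
          rw [← ENNReal.rpow_add_of_nonneg _ _ (by linarith) he.le, sub_add_cancel]
        rw [hsplit, mul_div_assoc]
        exact mul_le_mul_left (ENNReal.rpow_le_rpow (hWb t ht) (by linarith)) _
    _ = W ^ (e' - e) * lint μ f c e := by
        rw [lintegral_const_mul _ (meas_integrand μ f c e), lint]
    _ = _ := by rw [hW]

/-- Tendsto of `x ^ aₙ` when `aₙ → e > 0` with `aₙ ≥ e`. -/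
lemma tendsto_rpow_exp {x : ℝ≥0∞} {a : ℕ → ℝ} {e : ℝ} (he : 0 < e) (hae : ∀ n, e ≤ a n)
    (hat : Tendsto a atTop (𝓝 e)) : Tendsto (fun n => x ^ a n) atTop (𝓝 (x ^ e)) := by
  rcases eq_or_ne x 0 with rfl | hx0
  · rw [ENNReal.zero_rpow_of_pos he]
    exact tendsto_const_nhds.congr fun n =>
      (ENNReal.zero_rpow_of_pos (he.trans_le (hae n))).symm
  rcases eq_or_ne x ∞ with rfl | hxt
  · rw [ENNReal.top_rpow_of_pos he]
    exact tendsto_const_nhds.congr fun n =>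
      (ENNReal.top_rpow_of_pos (he.trans_le (hae n))).symm
  · have hb : 0 < x.toReal := ENNReal.toReal_pos hx0 hxt
    have key : ∀ y : ℝ, x ^ y = ENNReal.ofReal (Real.exp (Real.log x.toReal * y)) := by
      intro y
      rw [← Real.rpow_def_of_pos hb, ← ENNReal.ofReal_rpow_of_pos hb,
        ENNReal.ofReal_toReal hxt]
    simp only [key]
    exact (ENNReal.continuous_ofReal.tendsto _).comp
      ((Real.continuous_exp.tendsto _).comp (hat.const_mul _))

end LorentzAux

open LorentzAux

/-- `IL_{p,Q}(X,μ) = L_{p,m_Q}(X,μ)` together with the norm estimate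
`‖f‖_{L_{p,m_Q}} ≤ sup_{q∈Q} ‖f‖_{L_{p,q}} ≤ max{1, (m_Q/p)^{1/m_Q}} ‖f‖_{L_{p,m_Q}}`. -/
theorem stmt0 (μ : Measure X) (p : ℝ≥0∞) (hp0 : 0 < p) (hp : p ≠ ∞)
    (Q : Set ℝ≥0∞) (hQne : Q.Nonempty) (hQ : Q ⊆ Ioo 0 ∞) (hmQ : 0 < sInf Q) :
    {f : X → ℝ | (∀ q ∈ Q, f ∈ Lorentz μ p q) ∧ (⨆ q ∈ Q, lorentzNorm μ f p q) < ∞}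
      = Lorentz μ p (sInf Q) ∧
    ∀ f ∈ Lorentz μ p (sInf Q),
      lorentzNorm μ f p (sInf Q) ≤ (⨆ q ∈ Q, lorentzNorm μ f p q) ∧
      (⨆ q ∈ Q, lorentzNorm μ f p q) ≤
        max 1 ((sInf Q / p) ^ (1 / sInf Q).toReal) * lorentzNorm μ f p (sInf Q) := by
  obtain ⟨q0, hq0⟩ := hQne
  set m := sInf Q with hmdef
  have hm0 : m ≠ 0 := hmQ.ne'
  have hmle : ∀ q ∈ Q, m ≤ q := fun q hq => sInf_le hq
  have hqtop : ∀ q ∈ Q, q ≠ ∞ := fun q hq => (hQ hq).2.ne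
  have hmtop : m ≠ ∞ := ((hmle q0 hq0).trans_lt (hQ hq0).2).ne
  set c := (1 / p).toReal with hcdef
  have hc : 0 < c := by
    rw [hcdef, one_div, ENNReal.toReal_inv]
    exact inv_pos.2 (ENNReal.toReal_pos hp0.ne' hp)
  set e := m.toReal with hedef
  have he : 0 < e := ENNReal.toReal_pos hm0 hmtop
  have hmp_top : m / p ≠ ∞ := (ENNReal.div_lt_top hmtop hp0.ne').ne
  have hK : ENNReal.ofReal (c * e) = m / p := by
    rw [hcdef, hedef, one_div, ENNReal.toReal_inv, inv_mul_eq_div, ← ENNReal.toReal_div,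
      ENNReal.ofReal_toReal hmp_top]
  have h1m : (1 / m).toReal = 1 / e := by
    rw [one_div, ENNReal.toReal_inv, hedef, one_div]
  -- per-q upper bound
  have upper : ∀ (f : X → ℝ), ∀ q ∈ Q,
      lorentzNorm μ f p q ≤ (m / p) ^ (1 / e - 1 / q.toReal) * lorentzNorm μ f p m := by
    intro f q hq
    set e' := q.toReal with he'def
    have hee : e ≤ e' := ENNReal.toReal_mono (hqtop q hq) (hmle q hq)
    have he' : 0 < e' := he.trans_le hee
    have hnn : 0 ≤ 1 / e - 1 / e' :=
      sub_nonneg.2 (one_div_le_one_div_of_le he hee)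
    set L := lint μ f c e with hLdef
    have hlint := lint_le μ f hc he hee
    rw [hK] at hlint
    have hnorm_q : lorentzNorm μ f p q = (lint μ f c e') ^ (1 / e') :=
      lorentzNorm_eq μ f p (hqtop q hq)
    have hnorm_m : lorentzNorm μ f p m = L ^ (1 / e) := lorentzNorm_eq μ f p hmtop
    rw [hnorm_q, hnorm_m]
    have hd : (e' - e) / e * (1 / e') = 1 / e - 1 / e' := by
      field_simp
    calc (lint μ f c e') ^ (1 / e')
        ≤ (((m / p) * L) ^ ((e' - e) / e) * L) ^ (1 / e') :=
          ENNReal.rpow_le_rpow hlint (by positivity)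
      _ = ((m / p) * L) ^ ((e' - e) / e * (1 / e')) * L ^ (1 / e') := by
          rw [ENNReal.mul_rpow_of_nonneg _ _ (by positivity), ← ENNReal.rpow_mul]
      _ = (m / p) ^ (1 / e - 1 / e') * (L ^ (1 / e - 1 / e') * L ^ (1 / e')) := by
          rw [hd, ENNReal.mul_rpow_of_nonneg _ _ hnn, mul_assoc]
      _ = (m / p) ^ (1 / e - 1 / e') * L ^ (1 / e) := by
          rw [← ENNReal.rpow_add_of_nonneg _ _ hnn (by positivity), sub_add_cancel]
  -- the constant bound
  have hconst : ∀ q ∈ Q, (m / p) ^ (1 / e - 1 / q.toReal) ≤ max 1 ((m / p) ^ (1 / e)) := by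
    intro q hq
    have hee : e ≤ q.toReal := ENNReal.toReal_mono (hqtop q hq) (hmle q hq)
    have hnn : 0 ≤ 1 / e - 1 / q.toReal := sub_nonneg.2 (one_div_le_one_div_of_le he hee)
    rcases le_or_gt (m / p) 1 with h1 | h1
    · exact le_max_of_le_left (ENNReal.rpow_le_one h1 hnn)
    · refine le_max_of_le_right (ENNReal.rpow_le_rpow_of_exponent_le h1.le ?_)
      have h0 : 0 < 1 / q.toReal := one_div_pos.2 (he.trans_le hee)
      linarith
  -- the sup upper bound
  have supine : ∀ f : X → ℝ,
      (⨆ q ∈ Q, lorentzNorm μ f p q) ≤ max 1 ((m / p) ^ (1 / e)) * lorentzNorm μ f p m := by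
    intro f
    refine iSup₂_le fun q hq => (upper f q hq).trans ?_
    exact mul_le_mul_left (hconst q hq) _
  -- the lower bound via Fatou
  have lower : ∀ f : X → ℝ, lorentzNorm μ f p m ≤ ⨆ q ∈ Q, lorentzNorm μ f p q := by
    intro f
    set S := ⨆ q ∈ Q, lorentzNorm μ f p q with hSdef
    obtain ⟨u, hu_anti, hu_tend, hu_mem⟩ :=
      exists_seq_tendsto_sInf ⟨q0, hq0⟩ (OrderBot.bddBelow Q)
    set a : ℕ → ℝ := fun n => (u n).toReal with hadef
    have haQ : ∀ n, e ≤ a n := fun n =>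
      ENNReal.toReal_mono (hqtop _ (hu_mem n)) (hmle _ (hu_mem n))
    have hat : Tendsto a atTop (𝓝 e) :=
      (ENNReal.tendsto_toReal hmtop).comp hu_tend
    have fatou : lint μ f c e ≤ liminf (fun n => lint μ f c (a n)) atTop := by
      have step1 : lint μ f c e ≤ ∫⁻ t in Ioi (0 : ℝ),
          liminf (fun n =>
            (ENNReal.ofReal t ^ c * rearr μ f t) ^ (a n) / ENNReal.ofReal t) atTop := by
        rw [lint]
        refine setLIntegral_mono' measurableSet_Ioi fun t ht => ?_
        have ht0 : (0 : ℝ) < t := ht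
        have htne : ENNReal.ofReal t ≠ 0 := by
          simp [ENNReal.ofReal_eq_zero, not_le, ht0]
        have hdiv : Tendsto
            (fun n => (ENNReal.ofReal t ^ c * rearr μ f t) ^ (a n) / ENNReal.ofReal t) atTop
            (𝓝 ((ENNReal.ofReal t ^ c * rearr μ f t) ^ e / ENNReal.ofReal t)) := by
          simp only [div_eq_mul_inv]
          exact ENNReal.Tendsto.mul_const (tendsto_rpow_exp he haQ hat)
            (Or.inr (ENNReal.inv_ne_top.2 htne))
        exact hdiv.liminf_eq.symm.le
      refine step1.trans ?_
      have := lintegral_liminf_le (μ := volume.restrict (Ioi (0:ℝ))) (u := atTop)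
        (fun n => meas_integrand μ f c (a n))
      simpa only [lint] using this
    have hbound : ∀ n, lint μ f c (a n) ≤ S ^ (a n) := by
      intro n
      have hn0 : 0 < a n := he.trans_le (haQ n)
      have hle : lorentzNorm μ f p (u n) ≤ S := le_biSup _ (hu_mem n)
      have heq : lorentzNorm μ f p (u n) = (lint μ f c (a n)) ^ (1 / a n) :=
        lorentzNorm_eq μ f p (hqtop _ (hu_mem n))
      calc lint μ f c (a n) = (lorentzNorm μ f p (u n)) ^ (a n) := by
            rw [heq, ← ENNReal.rpow_mul, one_div, inv_mul_cancel₀ hn0.ne', ENNReal.rpow_one]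
        _ ≤ S ^ (a n) := ENNReal.rpow_le_rpow hle hn0.le
    have hSlim : Tendsto (fun n => S ^ a n) atTop (𝓝 (S ^ e)) :=
      tendsto_rpow_exp he haQ hat
    have hlim : liminf (fun n => lint μ f c (a n)) atTop ≤ S ^ e := by
      refine le_trans (liminf_le_liminf (Eventually.of_forall hbound)) ?_
      rw [hSlim.liminf_eq]
    have hfinal : lint μ f c e ≤ S ^ e := fatou.trans hlim
    calc lorentzNorm μ f p m = (lint μ f c e) ^ (1 / e) := lorentzNorm_eq μ f p hmtop
      _ ≤ (S ^ e) ^ (1 / e) := ENNReal.rpow_le_rpow hfinal (by positivity)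
      _ = S := by rw [← ENNReal.rpow_mul, mul_one_div, div_self he.ne', ENNReal.rpow_one]
  have hCfin : max 1 ((m / p) ^ (1 / e)) < ∞ :=
    max_lt one_lt_top (ENNReal.rpow_lt_top_of_nonneg (by positivity) hmp_top)
  constructor
  · ext f
    simp only [mem_setOf_eq, Lorentz]
    constructor
    · rintro ⟨hall, hsup⟩
      exact ⟨(hall q0 hq0).1, (lower f).trans_lt hsup⟩
    · rintro ⟨hmeas, hfin⟩
      refine ⟨fun q hq => ⟨hmeas, ?_⟩, ?_⟩
      · refine (upper f q hq).trans_lt (ENNReal.mul_lt_top ?_ hfin)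
        exact ENNReal.rpow_lt_top_of_nonneg
          (sub_nonneg.2 (one_div_le_one_div_of_le he
            (ENNReal.toReal_mono (hqtop q hq) (hmle q hq)))) hmp_top
      · exact (supine f).trans_lt (ENNReal.mul_lt_top hCfin hfin)
  · intro f _
    refine ⟨lower f, ?_⟩
    rw [h1m]
    exact supine f
end
end

section
/- Let (X,μ) be a measure space, 0<q≤∞ and J ⊆ (0,∞) with m_J = inf J > 0. If m_J ∈ J and M_J = sup J ∈ J, then ⋂_{p∈[m_J,M_J]} L_{p,q}(X,μ) = ⋂_{p∈J} L_{p,q}(X,μ) = L_{m_J,q}(X,μ) ∩ L_{M_J,q}(X,μ). -/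
open MeasureTheory Set ENNReal

noncomputable section

variable {X : Type*} [MeasurableSpace X]

lemma rearr_antitone (μ : Measure X) (f : X → ℝ) : Antitone (rearr μ f) := by
  intro t1 t2 h
  refine le_iInf fun s => le_iInf fun hs => ?_
  exact iInf₂_le s ⟨hs.1, hs.2.trans (ENNReal.ofReal_le_ofReal h)⟩

lemma rearr_measurable (μ : Measure X) (f : X → ℝ) : Measurable (rearr μ f) :=
  (rearr_antitone μ f).measurable

lemma pt_ineq {t : ℝ} (ht : 0 < t) {a b c : ℝ} (hba : b ≤ a) (hac : a ≤ c) :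
    ENNReal.ofReal t ^ a ≤ ENNReal.ofReal t ^ b + ENNReal.ofReal t ^ c := by
  rcases le_total (ENNReal.ofReal t) 1 with hx | hx
  · exact le_add_right (ENNReal.rpow_le_rpow_of_exponent_ge hx hba)
  · exact le_add_left (ENNReal.rpow_le_rpow_of_exponent_le hx hac)

lemma two_rpow {A B : ℝ≥0∞} {r : ℝ} (hr : 0 ≤ r) :
    (A + B) ^ r ≤ 2 ^ r * (A ^ r + B ^ r) := by
  calc (A + B) ^ r ≤ (2 * (A ⊔ B)) ^ r := by
        apply ENNReal.rpow_le_rpow _ hr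
        rw [two_mul]
        exact add_le_add le_sup_left le_sup_right
    _ = 2 ^ r * (A ⊔ B) ^ r := ENNReal.mul_rpow_of_nonneg _ _ hr
    _ ≤ 2 ^ r * (A ^ r + B ^ r) := by
        gcongr
        rcases le_total A B with h | h
        · rw [sup_eq_right.mpr h]; exact le_add_self
        · rw [sup_eq_left.mpr h]; exact le_self_add

lemma interp (μ : Measure X) {q p0 p p1 : ℝ≥0∞} (hq : 0 < q) (h0 : 0 < p0) (h1 : p1 < ∞)
    (hl : p0 ≤ p) (hr : p ≤ p1) {f : X → ℝ}
    (hf0 : lorentzNorm μ f p0 q < ∞) (hf1 : lorentzNorm μ f p1 q < ∞) :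
    lorentzNorm μ f p q < ∞ := by
  set b := (1 / p1).toReal with hbdef
  set a := (1 / p).toReal with hadef
  set c := (1 / p0).toReal with hcdef
  have hp0 : 0 < p := lt_of_lt_of_le h0 hl
  have hc_ne : (1 / p0) ≠ ∞ := by
    simp [ENNReal.div_eq_top, h0.ne']
  have hba : b ≤ a := by
    apply ENNReal.toReal_mono
    · simp [ENNReal.div_eq_top, hp0.ne']
    · exact ENNReal.div_le_div_left hr 1
  have hac : a ≤ c := by
    exact ENNReal.toReal_mono hc_ne (ENNReal.div_le_div_left hl 1)
  by_cases hq' : q = ∞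
  · simp only [lorentzNorm, if_pos hq'] at hf0 hf1 ⊢
    have : (⨆ t ∈ Ioi (0:ℝ), ENNReal.ofReal t ^ a * rearr μ f t) ≤
        (⨆ t ∈ Ioi (0:ℝ), ENNReal.ofReal t ^ b * rearr μ f t) +
        (⨆ t ∈ Ioi (0:ℝ), ENNReal.ofReal t ^ c * rearr μ f t) := by
      refine iSup₂_le fun t ht => ?_
      calc ENNReal.ofReal t ^ a * rearr μ f t
          ≤ (ENNReal.ofReal t ^ b + ENNReal.ofReal t ^ c) * rearr μ f t := by
            gcongr; exact pt_ineq ht hba hac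
        _ = ENNReal.ofReal t ^ b * rearr μ f t + ENNReal.ofReal t ^ c * rearr μ f t := by
            ring
        _ ≤ _ := add_le_add
            (le_iSup₂ (f := fun t (_ : t ∈ Ioi (0:ℝ)) => ENNReal.ofReal t ^ b * rearr μ f t) t ht)
            (le_iSup₂ (f := fun t (_ : t ∈ Ioi (0:ℝ)) => ENNReal.ofReal t ^ c * rearr μ f t) t ht)
    exact lt_of_le_of_lt this (ENNReal.add_lt_top.2 ⟨hf1, hf0⟩)
  · have hr0 : 0 < q.toReal := ENNReal.toReal_pos hq.ne' hq'
    simp only [lorentzNorm, if_neg hq'] at hf0 hf1 ⊢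
    set r := q.toReal
    have key : ∀ e : ℝ, (∫⁻ t in Ioi (0:ℝ),
        (ENNReal.ofReal t ^ e * rearr μ f t) ^ r / ENNReal.ofReal t) ^ (1/r) < ∞ →
        (∫⁻ t in Ioi (0:ℝ),
        (ENNReal.ofReal t ^ e * rearr μ f t) ^ r / ENNReal.ofReal t) ≠ ∞ := by
      intro e h
      intro hcon
      rw [hcon, ENNReal.top_rpow_of_pos (by positivity)] at h
      exact absurd h (lt_irrefl _)
    have hI0 := key c hf0
    have hI1 := key b hf1
    have hmeas : ∀ e : ℝ, Measurable (fun t =>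
        (ENNReal.ofReal t ^ e * rearr μ f t) ^ r / ENNReal.ofReal t) := by
      intro e
      exact (((ENNReal.measurable_ofReal.pow_const e).mul
        (rearr_measurable μ f)).pow_const r).div ENNReal.measurable_ofReal
    have hbound : (∫⁻ t in Ioi (0:ℝ),
        (ENNReal.ofReal t ^ a * rearr μ f t) ^ r / ENNReal.ofReal t) < ∞ := by
      have step : (∫⁻ t in Ioi (0:ℝ),
          (ENNReal.ofReal t ^ a * rearr μ f t) ^ r / ENNReal.ofReal t) ≤
          ∫⁻ t in Ioi (0:ℝ),
            (2 ^ r * ((ENNReal.ofReal t ^ b * rearr μ f t) ^ r / ENNReal.ofReal t) +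
             2 ^ r * ((ENNReal.ofReal t ^ c * rearr μ f t) ^ r / ENNReal.ofReal t)) := by
        refine setLIntegral_mono (by fun_prop) fun t ht => ?_
        calc (ENNReal.ofReal t ^ a * rearr μ f t) ^ r / ENNReal.ofReal t
            ≤ ((ENNReal.ofReal t ^ b + ENNReal.ofReal t ^ c) * rearr μ f t) ^ r /
              ENNReal.ofReal t := by
              apply ENNReal.div_le_div_right
              exact ENNReal.rpow_le_rpow (mul_le_mul_left (pt_ineq ht hba hac) _) hr0.le
          _ = (ENNReal.ofReal t ^ b * rearr μ f t + ENNReal.ofReal t ^ c * rearr μ f t) ^ r /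
              ENNReal.ofReal t := by rw [add_mul]
          _ ≤ 2 ^ r * ((ENNReal.ofReal t ^ b * rearr μ f t) ^ r +
                (ENNReal.ofReal t ^ c * rearr μ f t) ^ r) / ENNReal.ofReal t := by
              gcongr
              exact two_rpow hr0.le
          _ = _ := by
              rw [mul_add, ENNReal.add_div, mul_div_assoc, mul_div_assoc]
      have heq : (∫⁻ t in Ioi (0:ℝ),
          (2 ^ r * ((ENNReal.ofReal t ^ b * rearr μ f t) ^ r / ENNReal.ofReal t) +
           2 ^ r * ((ENNReal.ofReal t ^ c * rearr μ f t) ^ r / ENNReal.ofReal t))) =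
          2 ^ r * (∫⁻ t in Ioi (0:ℝ),
            (ENNReal.ofReal t ^ b * rearr μ f t) ^ r / ENNReal.ofReal t) +
          2 ^ r * (∫⁻ t in Ioi (0:ℝ),
            (ENNReal.ofReal t ^ c * rearr μ f t) ^ r / ENNReal.ofReal t) := by
        rw [lintegral_add_left (((hmeas b).const_mul _)),
          lintegral_const_mul _ (hmeas b), lintegral_const_mul _ (hmeas c)]
      refine lt_of_le_of_lt step ?_
      rw [heq]
      have h2 : (2:ℝ≥0∞) ^ r ≠ ∞ := by
        exact (ENNReal.rpow_lt_top_of_nonneg hr0.le (by norm_num)).ne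
      exact ENNReal.add_lt_top.2 ⟨ENNReal.mul_lt_top h2.lt_top hI1.lt_top,
        ENNReal.mul_lt_top h2.lt_top hI0.lt_top⟩
    exact ENNReal.rpow_lt_top_of_nonneg (by positivity) hbound.ne

/-- If `m_J ∈ J` and `M_J ∈ J` then
`⋂_{p∈[m_J,M_J]} L_{p,q} = ⋂_{p∈J} L_{p,q} = L_{m_J,q} ∩ L_{M_J,q}`. -/
theorem stmt6 (μ : Measure X) (q : ℝ≥0∞) (hq : 0 < q) (J : Set ℝ≥0∞)
    (hJ : J ⊆ Ioo 0 ∞) (hm : 0 < sInf J) (hmJ : sInf J ∈ J) (hMJ : sSup J ∈ J) :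
    (⋂ p ∈ Icc (sInf J) (sSup J), Lorentz μ p q) = (⋂ p ∈ J, Lorentz μ p q) ∧
    (⋂ p ∈ J, Lorentz μ p q) = Lorentz μ (sInf J) q ∩ Lorentz μ (sSup J) q := by
  have hMlt : sSup J < ∞ := (hJ hMJ).2
  have hJIcc : J ⊆ Icc (sInf J) (sSup J) := fun p hp => ⟨sInf_le hp, le_sSup hp⟩
  have hinterp : ∀ p ∈ Icc (sInf J) (sSup J),
      Lorentz μ (sInf J) q ∩ Lorentz μ (sSup J) q ⊆ Lorentz μ p q := by
    intro p hp f hf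
    exact ⟨hf.1.1, interp μ hq hm hMlt hp.1 hp.2 hf.1.2 hf.2.2⟩
  constructor
  · apply Subset.antisymm
    · intro f hf
      simp only [mem_iInter] at *
      exact fun p hp => hf p (hJIcc hp)
    · intro f hf
      simp only [mem_iInter] at *
      exact fun p hp => hinterp p hp ⟨hf _ hmJ, hf _ hMJ⟩
  · apply Subset.antisymm
    · intro f hf
      simp only [mem_iInter] at hf
      exact ⟨hf _ hmJ, hf _ hMJ⟩
    · intro f hf
      simp only [mem_iInter]
      exact fun p hp => hinterp p (hJIcc hp) hf
end
end

section
/- Let (X,μ) be a measure space, 0<q≤∞ and J ⊆ (0,∞) with m_J = inf J > 0. If m_J ∉ J and M_J = sup J ∈ J, then ⋂_{p∈J} L_{p,q}(X,μ) = ⋂_{p∈(m_J,M_J]} L_{p,q}(X,μ). -/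
open MeasureTheory Set ENNReal

noncomputable section

variable {X : Type*} [MeasurableSpace X]

lemma exp_mono {p1 p : ℝ≥0∞} (h1 : 0 < p1) (h12 : p1 ≤ p) :
    (1 / p).toReal ≤ (1 / p1).toReal := by
  apply ENNReal.toReal_mono
  · simp [ENNReal.div_eq_top, h1.ne']
  · exact ENNReal.div_le_div_left h12 1

lemma key_pointwise {a a1 a2 : ℝ} (ha1 : a ≤ a1) (ha2 : a2 ≤ a) {t : ℝ} (ht : 0 < t)
    (c : ℝ≥0∞) :
    ENNReal.ofReal t ^ a * c ≤ ENNReal.ofReal t ^ a1 * c ∨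
      ENNReal.ofReal t ^ a * c ≤ ENNReal.ofReal t ^ a2 * c := by
  rcases le_total t 1 with h | h
  · exact Or.inr (mul_le_mul_left
      (ENNReal.rpow_le_rpow_of_exponent_ge (ENNReal.ofReal_le_one.mpr h) ha2) c)
  · exact Or.inl (mul_le_mul_left
      (ENNReal.rpow_le_rpow_of_exponent_le (ENNReal.one_le_ofReal.mpr h) ha1) c)

lemma key (μ : Measure X) (f : X → ℝ) {q p p1 p2 : ℝ≥0∞} (hq : 0 < q)
    (h1 : 0 < p1) (h12 : p1 ≤ p) (h2 : p ≤ p2) (h2t : p2 ≠ ∞)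
    (hf1 : lorentzNorm μ f p1 q < ∞) (hf2 : lorentzNorm μ f p2 q < ∞) :
    lorentzNorm μ f p q < ∞ := by
  have hp1 : 0 < p := h1.trans_le h12
  have hpt : p ≠ ∞ := (h2.trans_lt (lt_top_iff_ne_top.mpr h2t)).ne
  have ha1 : (1 / p).toReal ≤ (1 / p1).toReal := exp_mono h1 h12
  have ha2 : (1 / p2).toReal ≤ (1 / p).toReal := exp_mono hp1 h2
  have hapos : 0 < (1 / p).toReal := by
    apply ENNReal.toReal_pos
    · simp [hpt]
    · simp [ENNReal.div_eq_top, hp1.ne']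
  unfold lorentzNorm at *
  by_cases hqt : q = ∞
  · simp only [hqt, if_true] at hf1 hf2 ⊢
    calc ⨆ t ∈ Ioi (0:ℝ), ENNReal.ofReal t ^ (1 / p).toReal * rearr μ f t
        ≤ (⨆ t ∈ Ioi (0:ℝ), ENNReal.ofReal t ^ (1 / p1).toReal * rearr μ f t)
          + ⨆ t ∈ Ioi (0:ℝ), ENNReal.ofReal t ^ (1 / p2).toReal * rearr μ f t := by
          refine iSup₂_le fun t ht => ?_
          rcases key_pointwise ha1 ha2 ht (rearr μ f t) with h | h
          · exact le_add_right (h.trans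
              (le_iSup₂ (f := fun t _ => ENNReal.ofReal t ^ (1 / p1).toReal * rearr μ f t) t ht))
          · exact le_add_left (h.trans
              (le_iSup₂ (f := fun t _ => ENNReal.ofReal t ^ (1 / p2).toReal * rearr μ f t) t ht))
      _ < ∞ := ENNReal.add_lt_top.mpr ⟨hf1, hf2⟩
  · simp only [hqt, if_false] at hf1 hf2 ⊢
    have hqr : 0 < q.toReal := ENNReal.toReal_pos hq.ne' hqt
    have key' : ∀ t : ℝ,
        (ENNReal.ofReal t ^ (1 / p).toReal * rearr μ f t) ^ q.toReal / ENNReal.ofReal t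
        ≤ (ENNReal.ofReal t ^ (1 / p1).toReal * rearr μ f t) ^ q.toReal / ENNReal.ofReal t
          + (ENNReal.ofReal t ^ (1 / p2).toReal * rearr μ f t) ^ q.toReal / ENNReal.ofReal t := by
      intro t
      rcases le_or_gt t 0 with ht | ht
      · have hapos' : (0:ℝ≥0∞) ^ (1 / p).toReal = 0 := ENNReal.zero_rpow_of_pos hapos
        simp [ENNReal.ofReal_eq_zero.mpr ht, hapos', ENNReal.zero_rpow_of_pos hqr, one_div,
          ENNReal.toReal_inv, ENNReal.zero_rpow_of_pos (inv_pos.mpr (ENNReal.toReal_pos hp1.ne' hpt))]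
      rcases key_pointwise ha1 ha2 ht (rearr μ f t) with h | h
      · exact le_add_right (ENNReal.div_le_div_right (ENNReal.rpow_le_rpow h hqr.le) _)
      · exact le_add_left (ENNReal.div_le_div_right (ENNReal.rpow_le_rpow h hqr.le) _)
    have hint : (∫⁻ t in Ioi (0:ℝ),
        (ENNReal.ofReal t ^ (1 / p).toReal * rearr μ f t) ^ q.toReal / ENNReal.ofReal t) < ∞ := by
      calc (∫⁻ t in Ioi (0:ℝ),
            (ENNReal.ofReal t ^ (1 / p).toReal * rearr μ f t) ^ q.toReal / ENNReal.ofReal t)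
          ≤ ∫⁻ t in Ioi (0:ℝ),
            ((ENNReal.ofReal t ^ (1 / p1).toReal * rearr μ f t) ^ q.toReal / ENNReal.ofReal t
             + (ENNReal.ofReal t ^ (1 / p2).toReal * rearr μ f t) ^ q.toReal / ENNReal.ofReal t) :=
            lintegral_mono fun t => key' t
        _ = (∫⁻ t in Ioi (0:ℝ),
              (ENNReal.ofReal t ^ (1 / p1).toReal * rearr μ f t) ^ q.toReal / ENNReal.ofReal t)
            + ∫⁻ t in Ioi (0:ℝ),
              (ENNReal.ofReal t ^ (1 / p2).toReal * rearr μ f t) ^ q.toReal / ENNReal.ofReal t := by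
            apply lintegral_add_left'
            have hr : Measurable (rearr μ f) := by
              apply Antitone.measurable
              intro u v huv
              refine le_iInf₂ fun s hs => iInf₂_le s ⟨hs.1, hs.2.trans ?_⟩
              exact ENNReal.ofReal_le_ofReal huv
            exact ((((ENNReal.measurable_ofReal.pow_const _).mul hr).pow_const _).div
              ENNReal.measurable_ofReal).aemeasurable
        _ < ∞ := by
            apply ENNReal.add_lt_top.mpr
            constructor
            · exact (ENNReal.rpow_lt_top_iff_of_pos (by positivity)).mp hf1
            · exact (ENNReal.rpow_lt_top_iff_of_pos (by positivity)).mp hf2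
    exact ENNReal.rpow_lt_top_of_nonneg (by positivity) hint.ne

/-- If `m_J ∉ J` and `M_J ∈ J` then `⋂_{p∈J} L_{p,q} = ⋂_{p∈(m_J,M_J]} L_{p,q}`. -/
theorem stmt8 (μ : Measure X) (q : ℝ≥0∞) (hq : 0 < q) (J : Set ℝ≥0∞)
    (hJ : J ⊆ Ioo 0 ∞) (hm : 0 < sInf J) (hmJ : sInf J ∉ J) (hMJ : sSup J ∈ J) :
    (⋂ p ∈ J, Lorentz μ p q) = ⋂ p ∈ Ioc (sInf J) (sSup J), Lorentz μ p q := by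
  apply Set.Subset.antisymm
  · intro f hf
    simp only [mem_iInter] at hf ⊢
    intro p hp
    obtain ⟨p1, hp1J, hp1⟩ : ∃ p1 ∈ J, p1 < p := sInf_lt_iff.mp hp.1
    obtain ⟨hmeas, hn1⟩ := hf p1 hp1J
    obtain ⟨_, hn2⟩ := hf (sSup J) hMJ
    exact ⟨hmeas, key μ f hq (hJ hp1J).1 hp1.le hp.2 (hJ hMJ).2.ne hn1 hn2⟩
  · apply Set.biInter_subset_biInter_left
    intro p hp
    exact ⟨lt_of_le_of_ne (sInf_le hp) (fun h => hmJ (h ▸ hp)), le_sSup hp⟩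
end
end

section
/- Let (X,μ) be a measure space, 0<q≤∞ and J ⊆ (0,∞) with m_J = inf J > 0. If m_J ∉ J and M_J = sup J ∉ J (with M_J < ∞), then ⋂_{p∈J} L_{p,q}(X,μ) = ⋂_{p∈(m_J,M_J)} L_{p,q}(X,μ). -/
open MeasureTheory Set ENNReal

noncomputable section

variable {X : Type*} [MeasurableSpace X]

lemma lorentz_interp (μ : Measure X) (q : ℝ≥0∞) (hq : 0 < q) {a b p : ℝ≥0∞}
    (ha : 0 < a) (hb : b ≠ ∞) (hap : a ≤ p) (hpb : p ≤ b) (f : X → ℝ)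
    (hfa : lorentzNorm μ f a q < ∞) (hfb : lorentzNorm μ f b q < ∞) :
    lorentzNorm μ f p q < ∞ := by
  have hp : 0 < p := lt_of_lt_of_le ha hap
  have h1a : (1 : ℝ≥0∞) / a ≠ ∞ := by
    simp [ENNReal.div_eq_top, ha.ne']
  have heba : (1 / b).toReal ≤ (1 / p).toReal ∧ (1 / p).toReal ≤ (1 / a).toReal := by
    constructor
    · exact ENNReal.toReal_mono (by simp [ENNReal.div_eq_top, hp.ne']) (by
        exact ENNReal.div_le_div_left hpb 1)
    · exact ENNReal.toReal_mono h1a (ENNReal.div_le_div_left hap 1)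
  obtain ⟨heb, hea⟩ := heba
  -- pointwise bounds
  have key1 : ∀ t : ℝ, 0 < t → t ≤ 1 →
      ENNReal.ofReal t ^ (1 / p).toReal * rearr μ f t ≤
        ENNReal.ofReal t ^ (1 / b).toReal * rearr μ f t := fun t ht ht1 =>
    mul_le_mul_left (ENNReal.rpow_le_rpow_of_exponent_ge (ENNReal.ofReal_le_one.2 ht1) heb) _
  have key2 : ∀ t : ℝ, 1 ≤ t →
      ENNReal.ofReal t ^ (1 / p).toReal * rearr μ f t ≤
        ENNReal.ofReal t ^ (1 / a).toReal * rearr μ f t := fun t ht =>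
    mul_le_mul_left (ENNReal.rpow_le_rpow_of_exponent_le (ENNReal.one_le_ofReal.2 ht) hea) _
  by_cases hqtop : q = ∞
  · subst hqtop
    simp only [lorentzNorm, if_pos rfl] at hfa hfb ⊢
    have : (⨆ t ∈ Ioi (0 : ℝ), ENNReal.ofReal t ^ (1 / p).toReal * rearr μ f t) ≤
        (⨆ t ∈ Ioi (0 : ℝ), ENNReal.ofReal t ^ (1 / b).toReal * rearr μ f t) +
        (⨆ t ∈ Ioi (0 : ℝ), ENNReal.ofReal t ^ (1 / a).toReal * rearr μ f t) := by
      refine iSup₂_le fun t ht => ?_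
      rcases le_total t 1 with h1 | h1
      · exact le_trans (key1 t ht h1) (le_trans (le_iSup₂ (f := fun t _ =>
          ENNReal.ofReal t ^ (1 / b).toReal * rearr μ f t) t ht) le_self_add)
      · exact le_trans (key2 t h1) (le_trans (le_iSup₂ (f := fun t _ =>
          ENNReal.ofReal t ^ (1 / a).toReal * rearr μ f t) t ht) le_add_self)
    exact lt_of_le_of_lt this (ENNReal.add_lt_top.2 ⟨hfb, hfa⟩)
  · have hE : 0 < q.toReal := ENNReal.toReal_pos hq.ne' hqtop
    simp only [lorentzNorm, if_neg hqtop] at hfa hfb ⊢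
    set g : ℝ≥0∞ → ℝ → ℝ≥0∞ := fun r t =>
      (ENNReal.ofReal t ^ (1 / r).toReal * rearr μ f t) ^ q.toReal / ENNReal.ofReal t with hg
    have hfa' : ∫⁻ t in Ioi (0 : ℝ), g a t < ∞ :=
      (ENNReal.rpow_lt_top_iff_of_pos (by positivity)).1 hfa
    have hfb' : ∫⁻ t in Ioi (0 : ℝ), g b t < ∞ :=
      (ENNReal.rpow_lt_top_iff_of_pos (by positivity)).1 hfb
    have hsplit : Ioc (0 : ℝ) 1 ∪ Ioi 1 = Ioi 0 := Ioc_union_Ioi_eq_Ioi zero_le_one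
    have hdisj : Disjoint (Ioc (0 : ℝ) 1) (Ioi 1) := by
      rw [Set.disjoint_left]
      rintro x ⟨_, hx1⟩ hx2
      exact absurd hx2 (not_lt.2 hx1)
    have hmain : ∫⁻ t in Ioi (0 : ℝ), g p t ≤
        (∫⁻ t in Ioi (0 : ℝ), g b t) + ∫⁻ t in Ioi (0 : ℝ), g a t := by
      have hsum : ∫⁻ t in Ioi (0 : ℝ), g p t =
          (∫⁻ t in Ioc (0 : ℝ) 1, g p t) + ∫⁻ t in Ioi (1 : ℝ), g p t := by
        rw [← lintegral_union measurableSet_Ioi hdisj, hsplit]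
      rw [hsum]
      refine add_le_add ?_ ?_
      · calc ∫⁻ t in Ioc (0 : ℝ) 1, g p t ≤ ∫⁻ t in Ioc (0 : ℝ) 1, g b t := by
              refine setLIntegral_mono' measurableSet_Ioc fun t ht => ?_
              exact ENNReal.div_le_div_right
                (ENNReal.rpow_le_rpow (key1 t ht.1 ht.2) hE.le) _
          _ ≤ ∫⁻ t in Ioi (0 : ℝ), g b t := lintegral_mono_set Ioc_subset_Ioi_self
      · calc ∫⁻ t in Ioi (1 : ℝ), g p t ≤ ∫⁻ t in Ioi (1 : ℝ), g a t := by
              refine setLIntegral_mono' measurableSet_Ioi fun t ht => ?_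
              exact ENNReal.div_le_div_right
                (ENNReal.rpow_le_rpow (key2 t (le_of_lt ht)) hE.le) _
          _ ≤ ∫⁻ t in Ioi (0 : ℝ), g a t :=
              lintegral_mono_set (Ioi_subset_Ioi zero_le_one)
    exact ENNReal.rpow_lt_top_of_nonneg (by positivity)
      (lt_of_le_of_lt hmain (ENNReal.add_lt_top.2 ⟨hfb', hfa'⟩)).ne

/-- If `m_J ∉ J` and `M_J ∉ J` (`M_J < ∞`) then
`⋂_{p∈J} L_{p,q} = ⋂_{p∈(m_J,M_J)} L_{p,q}`. -/
theorem stmt9 (μ : Measure X) (q : ℝ≥0∞) (hq : 0 < q) (J : Set ℝ≥0∞)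
    (hJ : J ⊆ Ioo 0 ∞) (hm : 0 < sInf J) (hmJ : sInf J ∉ J) (hMJ : sSup J ∉ J)
    (hM : sSup J ≠ ∞) :
    (⋂ p ∈ J, Lorentz μ p q) = ⋂ p ∈ Ioo (sInf J) (sSup J), Lorentz μ p q := by
  have hJsub : J ⊆ Ioo (sInf J) (sSup J) := fun p hp =>
    ⟨lt_of_le_of_ne (sInf_le hp) (fun h => hmJ (h ▸ hp)),
     lt_of_le_of_ne (le_sSup hp) (fun h => hMJ (h.symm ▸ hp))⟩
  apply Set.Subset.antisymm
  · intro f hf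
    simp only [Set.mem_iInter] at hf ⊢
    intro p hp
    obtain ⟨hp1, hp2⟩ := hp
    obtain ⟨a, haJ, hap⟩ := sInf_lt_iff.1 hp1
    obtain ⟨b, hbJ, hpb⟩ := lt_sSup_iff.1 hp2
    have hfa := hf a haJ
    have hfb := hf b hbJ
    exact ⟨hfa.1, lorentz_interp μ q hq (hJ haJ).1 (hJ hbJ).2.ne hap.le hpb.le f
      hfa.2 hfb.2⟩
  · exact Set.biInter_subset_biInter_left hJsub
end
end

section
/- Let (X,μ) be a measure space, 0<q≤∞ and J ⊆ (0,∞) with m_J = inf J > 0 and M_J = sup J < ∞. Then IL_{J,q}(X,μ) ⊆ L_{m_J,q}(X,μ) ∩ L_{M_J,q}(X,μ), and moreover for every f ∈ IL_{J,q}(X,μ), ‖f‖_{L_{m_J,q}} ≤ sup_{p∈J} ‖f‖_{L_{p,q}} and ‖f‖_{L_{M_J,q}} ≤ sup_{p∈J} ‖f‖_{L_{p,q}}. -/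
open MeasureTheory Set ENNReal

noncomputable section

variable {X : Type*} [MeasurableSpace X]

/-- `IL_{J,q}(X,μ)`: functions in every `L_{p,q}`, `p ∈ J`, with uniformly bounded norms. -/
def ILJq (μ : Measure X) (J : Set ℝ≥0∞) (q : ℝ≥0∞) : Set (X → ℝ) :=
  {f | (∀ p ∈ J, f ∈ Lorentz μ p q) ∧ (⨆ p ∈ J, lorentzNorm μ f p q) < ∞}

lemma lorentz_le_of_tendsto (μ : Measure X) (f : X → ℝ) (q : ℝ≥0∞) (hq : q ≠ 0)
    (J : Set ℝ≥0∞) (p₀ : ℝ≥0∞) (hp₀ : p₀ ≠ 0) (u : ℕ → ℝ≥0∞) (hu : ∀ n, u n ∈ J)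
    (hlim : Filter.Tendsto u Filter.atTop (nhds p₀)) :
    lorentzNorm μ f p₀ q ≤ ⨆ p ∈ J, lorentzNorm μ f p q := by
  set S := ⨆ p ∈ J, lorentzNorm μ f p q with hS
  have hSn : ∀ n, lorentzNorm μ f (u n) q ≤ S := fun n => le_biSup (fun p => lorentzNorm μ f p q) (hu n)
  -- convergence of exponents
  have ha : Filter.Tendsto (fun n => (1 / u n).toReal) Filter.atTop
      (nhds (1 / p₀).toReal) := by
    have h1 : Filter.Tendsto (fun n => (u n)⁻¹) Filter.atTop (nhds p₀⁻¹) := hlim.inv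
    simp only [one_div]
    exact (ENNReal.tendsto_toReal (ENNReal.inv_ne_top.2 hp₀)).comp h1
  -- pointwise convergence of the integrand factor
  have hpt : ∀ t ∈ Ioi (0 : ℝ), Filter.Tendsto
      (fun n => ENNReal.ofReal t ^ (1 / u n).toReal * rearr μ f t) Filter.atTop
      (nhds (ENNReal.ofReal t ^ (1 / p₀).toReal * rearr μ f t)) := by
    intro t ht
    have ht' : (0 : ℝ) < t := ht
    have hx : Filter.Tendsto (fun n => ENNReal.ofReal t ^ (1 / u n).toReal) Filter.atTop
        (nhds (ENNReal.ofReal t ^ (1 / p₀).toReal)) := by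
      simp only [ENNReal.ofReal_rpow_of_pos ht']
      exact (ENNReal.continuous_ofReal.tendsto _).comp
        (((Real.continuousAt_const_rpow ht'.ne').tendsto).comp ha)
    refine ENNReal.Tendsto.mul_const hx (Or.inl ?_)
    exact (ENNReal.rpow_pos (ENNReal.ofReal_pos.2 ht') ENNReal.ofReal_ne_top).ne'
  rcases eq_or_ne q ∞ with hqtop | hqtop
  · subst hqtop
    simp only [lorentzNorm, if_pos rfl]
    refine iSup₂_le fun t ht => ?_
    refine le_of_tendsto (hpt t ht) (Filter.Eventually.of_forall fun n => ?_)
    calc ENNReal.ofReal t ^ (1 / u n).toReal * rearr μ f t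
        ≤ ⨆ t ∈ Ioi (0 : ℝ), ENNReal.ofReal t ^ (1 / u n).toReal * rearr μ f t :=
          le_biSup (fun t => ENNReal.ofReal t ^ (1 / u n).toReal * rearr μ f t) ht
      _ = lorentzNorm μ f (u n) ∞ := by simp [lorentzNorm]
      _ ≤ S := hSn n
  · have hq' : 0 < q.toReal := ENNReal.toReal_pos hq hqtop
    set F : ℕ → ℝ → ℝ≥0∞ := fun n t =>
      (ENNReal.ofReal t ^ (1 / u n).toReal * rearr μ f t) ^ q.toReal / ENNReal.ofReal t
      with hF
    set F₀ : ℝ → ℝ≥0∞ := fun t =>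
      (ENNReal.ofReal t ^ (1 / p₀).toReal * rearr μ f t) ^ q.toReal / ENNReal.ofReal t
      with hF₀
    have hmeas : ∀ n, Measurable (F n) := by
      intro n
      apply Measurable.div
      · exact (ENNReal.continuous_rpow_const.measurable.comp
          ((ENNReal.continuous_rpow_const.measurable.comp ENNReal.measurable_ofReal).mul
            (rearr_antitone μ f).measurable))
      · exact ENNReal.measurable_ofReal
    have hptF : ∀ t ∈ Ioi (0 : ℝ), Filter.Tendsto (fun n => F n t) Filter.atTop
        (nhds (F₀ t)) := by
      intro t ht
      have h1 := ((ENNReal.continuous_rpow_const (y := q.toReal)).tendsto _).comp (hpt t ht)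
      exact ENNReal.Tendsto.mul_const h1 (Or.inr (ENNReal.inv_ne_top.2
        (ENNReal.ofReal_pos.2 ht).ne'))
    have hle : ∫⁻ t in Ioi (0 : ℝ), F₀ t ≤ S ^ q.toReal := by
      have h1 : ∫⁻ t in Ioi (0 : ℝ), F₀ t
          = ∫⁻ t in Ioi (0 : ℝ), Filter.liminf (fun n => F n t) Filter.atTop := by
        refine setLIntegral_congr_fun measurableSet_Ioi (fun t ht => ?_)
        exact ((hptF t ht).liminf_eq).symm
      have h2 := lintegral_liminf_le (μ := volume.restrict (Ioi (0:ℝ))) (u := Filter.atTop) hmeas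
      have h3 : ∀ n, ∫⁻ t in Ioi (0 : ℝ), F n t ≤ S ^ q.toReal := by
        intro n
        have h4 : (∫⁻ t in Ioi (0 : ℝ), F n t) ^ (1 / q.toReal) ≤ S := by
          have := hSn n
          rwa [lorentzNorm, if_neg hqtop] at this
        calc ∫⁻ t in Ioi (0 : ℝ), F n t
            = ((∫⁻ t in Ioi (0 : ℝ), F n t) ^ (1 / q.toReal)) ^ q.toReal := by
              rw [← ENNReal.rpow_mul, one_div, inv_mul_cancel₀ hq'.ne', ENNReal.rpow_one]
          _ ≤ S ^ q.toReal := ENNReal.rpow_le_rpow h4 hq'.le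
      have h5 : Filter.liminf (fun n => ∫⁻ t in Ioi (0 : ℝ), F n t) Filter.atTop
          ≤ S ^ q.toReal := by
        refine Filter.liminf_le_of_frequently_le
          (Filter.Eventually.frequently (Filter.Eventually.of_forall h3))
      exact h1 ▸ (h2.trans h5)
    rw [lorentzNorm, if_neg hqtop]
    calc (∫⁻ t in Ioi (0 : ℝ), F₀ t) ^ (1 / q.toReal)
        ≤ (S ^ q.toReal) ^ (1 / q.toReal) := ENNReal.rpow_le_rpow hle (by positivity)
      _ = S := by
          rw [← ENNReal.rpow_mul, mul_one_div, div_self hq'.ne', ENNReal.rpow_one]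

/-- `IL_{J,q} ⊆ L_{m_J,q} ∩ L_{M_J,q}` with `‖f‖_{L_{m_J,q}}, ‖f‖_{L_{M_J,q}} ≤ sup_{p∈J} ‖f‖_{L_{p,q}}`. -/
theorem stmt10 (μ : Measure X) (q : ℝ≥0∞) (hq : 0 < q) (J : Set ℝ≥0∞)
    (hJne : J.Nonempty) (hJ : J ⊆ Ioo 0 ∞) (hm : 0 < sInf J) (hM : sSup J ≠ ∞) :
    ILJq μ J q ⊆ Lorentz μ (sInf J) q ∩ Lorentz μ (sSup J) q ∧
    ∀ f ∈ ILJq μ J q,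
      lorentzNorm μ f (sInf J) q ≤ (⨆ p ∈ J, lorentzNorm μ f p q) ∧
      lorentzNorm μ f (sSup J) q ≤ (⨆ p ∈ J, lorentzNorm μ f p q) := by
  obtain ⟨p₁, hp₁⟩ := id hJne
  have hsup0 : sSup J ≠ 0 := fun h =>
    ((hJ hp₁).1.trans_le (le_sSup hp₁)).ne' (by simp [h])
  obtain ⟨u, -, hulim, humem⟩ := exists_seq_tendsto_sInf hJne (OrderBot.bddBelow J)
  obtain ⟨v, -, hvlim, hvmem⟩ := exists_seq_tendsto_sSup hJne (OrderTop.bddAbove J)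
  have key : ∀ f ∈ ILJq μ J q,
      lorentzNorm μ f (sInf J) q ≤ (⨆ p ∈ J, lorentzNorm μ f p q) ∧
      lorentzNorm μ f (sSup J) q ≤ (⨆ p ∈ J, lorentzNorm μ f p q) := by
    intro f _
    exact ⟨lorentz_le_of_tendsto μ f q hq.ne' J _ hm.ne' u humem hulim,
      lorentz_le_of_tendsto μ f q hq.ne' J _ hsup0 v hvmem hvlim⟩
  refine ⟨fun f hf => ?_, key⟩
  have hmeas : Measurable f := (hf.1 p₁ hp₁).1
  obtain ⟨h₁, h₂⟩ := key f hf
  exact ⟨⟨hmeas, h₁.trans_lt hf.2⟩, ⟨hmeas, h₂.trans_lt hf.2⟩⟩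
end
end

section
/- Let (X,μ) be a measure space, 0<q<∞ and J ⊆ (0,∞) with m_J = inf J > 0 and M_J = sup J = ∞. Then IL_{J,q}(X,μ) = {0}, i.e. every f ∈ IL_{J,q}(X,μ) vanishes μ-almost everywhere on X. -/
open MeasureTheory Set ENNReal

noncomputable section

variable {X : Type*} [MeasurableSpace X]

/-- If `0 < q < ∞` and `M_J = ∞`, then every `f ∈ IL_{J,q}` vanishes `μ`-a.e. -/
theorem stmt11 (μ : Measure X) (q : ℝ≥0∞) (hq0 : 0 < q) (hq : q ≠ ∞) (J : Set ℝ≥0∞)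
    (hJne : J.Nonempty) (hJ : J ⊆ Ioo 0 ∞) (hm : 0 < sInf J) (hM : sSup J = ∞) :
    ∀ f ∈ ILJq μ J q, f =ᵐ[μ] 0 := by
  intro f hf
  obtain ⟨hmem, hsup⟩ := hf
  have hQ : 0 < q.toReal := ENNReal.toReal_pos hq0.ne' hq
  set Q := q.toReal with hQdef
  -- Key claim : all distribution values vanish
  have key : ∀ α : ℝ, 0 < α → distFun μ f α = 0 := by
    intro α hα
    by_contra hd
    have hd0 : 0 < distFun μ f α := pos_iff_ne_zero.mpr hd
    set d := distFun μ f α with hdd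
    -- choose t₀ with 0 < t₀ ≤ 1 and ofReal t₀ < d
    set b := min d 1 with hb
    have hb0 : 0 < b := lt_min hd0 one_pos
    have hbtop : b ≠ ∞ := ((min_le_right d 1).trans_lt ENNReal.one_lt_top).ne
    set t₀ := b.toReal / 2 with ht₀def
    have hbR : 0 < b.toReal := ENNReal.toReal_pos hb0.ne' hbtop
    have ht₀ : 0 < t₀ := by positivity
    have ht₀1 : t₀ ≤ 1 := by
      have : b.toReal ≤ 1 := by
        have := min_le_right d 1
        calc b.toReal ≤ (1 : ℝ≥0∞).toReal :=
          ENNReal.toReal_mono ENNReal.one_ne_top this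
        _ = 1 := by simp
      linarith
    have ht₀d : ENNReal.ofReal t₀ < d := by
      have h1 : ENNReal.ofReal t₀ < ENNReal.ofReal b.toReal :=
        ENNReal.ofReal_lt_ofReal_iff hbR |>.mpr (by linarith)
      have h2 : ENNReal.ofReal b.toReal = b := ENNReal.ofReal_toReal hbtop
      exact h1.trans_le (h2.le.trans (min_le_left d 1))
    -- rearrangement lower bound on (0, t₀]
    have hre : ∀ t : ℝ, t ≤ t₀ → ENNReal.ofReal α ≤ rearr μ f t := by
      intro t ht
      refine le_iInf₂ fun s hs => ?_
      obtain ⟨hs0, hsle⟩ := hs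
      have hst : distFun μ f s < d :=
        lt_of_le_of_lt hsle (lt_of_le_of_lt (ENNReal.ofReal_le_ofReal ht) ht₀d)
      have hαs : α < s := by
        by_contra h
        push_neg at h
        have hmono : d ≤ distFun μ f s :=
          measure_mono fun x hx => lt_of_le_of_lt h hx
        exact absurd hmono hst.not_ge
      exact ENNReal.ofReal_le_ofReal hαs.le
    set A := ENNReal.ofReal α with hAdef
    have hA0 : A ≠ 0 := (ENNReal.ofReal_pos.mpr hα).ne'
    have hAtop : A ≠ ∞ := ENNReal.ofReal_ne_top
    -- per-p lower bound
    have hbound : ∀ p ∈ J, Q ≤ p.toReal →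
        A * ENNReal.ofReal t₀ ^ (1 / Q) * ENNReal.ofReal (p.toReal / Q) ^ (1 / Q)
          ≤ lorentzNorm μ f p q := by
      intro p hp hpQ
      obtain ⟨hp0, hptop⟩ := hJ hp
      have hpR : 0 < p.toReal := ENNReal.toReal_pos hp0.ne' hptop.ne
      set c := Q / p.toReal with hcdef
      have hc0 : 0 < c := div_pos hQ hpR
      have hc1 : c ≤ 1 := (div_le_one hpR).mpr hpQ
      have hr : (1 / p).toReal = 1 / p.toReal := by
        rw [one_div, one_div, ENNReal.toReal_inv]
      -- pointwise bound on Ioc 0 t₀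
      have hpt : ∀ t ∈ Ioc (0 : ℝ) t₀,
          A ^ Q * ENNReal.ofReal (t ^ (c - 1))
            ≤ (ENNReal.ofReal t ^ (1 / p).toReal * rearr μ f t) ^ Q / ENNReal.ofReal t := by
        intro t ht
        obtain ⟨ht0, htt₀⟩ := ht
        have hot0 : ENNReal.ofReal t ≠ 0 := (ENNReal.ofReal_pos.mpr ht0).ne'
        have hottop : ENNReal.ofReal t ≠ ∞ := ENNReal.ofReal_ne_top
        have h1 : ENNReal.ofReal t ^ (1 / p).toReal * A
            ≤ ENNReal.ofReal t ^ (1 / p).toReal * rearr μ f t :=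
          mul_le_mul_right (hre t htt₀) _
        have h2 : (ENNReal.ofReal t ^ (1 / p).toReal * A) ^ Q
            ≤ (ENNReal.ofReal t ^ (1 / p).toReal * rearr μ f t) ^ Q :=
          ENNReal.rpow_le_rpow h1 hQ.le
        refine le_trans (le_of_eq ?_) (ENNReal.div_le_div_right h2 _)
        have hexp : (1 / p).toReal * Q = c := by
          rw [hr, hcdef]; field_simp
        rw [ENNReal.mul_rpow_of_nonneg _ _ hQ.le, ← ENNReal.rpow_mul, hexp,
          mul_comm (ENNReal.ofReal t ^ c) (A ^ Q), mul_div_assoc]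
        congr 1
        rw [ENNReal.ofReal_rpow_of_pos ht0, Real.rpow_sub ht0, Real.rpow_one,
          ENNReal.ofReal_div_of_pos ht0]
      -- integral computation
      have hint : IntegrableOn (fun t : ℝ => t ^ (c - 1)) (Ioc 0 t₀) :=
        (intervalIntegral.intervalIntegrable_rpow' (by linarith)).1
      have hval : ∫ t in Ioc (0:ℝ) t₀, t ^ (c - 1) = t₀ ^ c / c := by
        rw [← intervalIntegral.integral_of_le ht₀.le]
        rw [integral_rpow (Or.inl (by linarith))]
        rw [Real.zero_rpow (by linarith : c - 1 + 1 ≠ 0)]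
        norm_num
      have hlin : ∫⁻ t in Ioc (0:ℝ) t₀, ENNReal.ofReal (t ^ (c - 1)) =
          ENNReal.ofReal (t₀ ^ c / c) := by
        rw [← ofReal_integral_eq_lintegral_ofReal hint]
        · rw [hval]
        · filter_upwards [ae_restrict_mem measurableSet_Ioc] with t ht
          exact Real.rpow_nonneg ht.1.le _
      have hrearr : Measurable (rearr μ f) := by
        apply Antitone.measurable
        intro t₁ t₂ hst
        refine le_iInf₂ fun s hs => iInf₂_le s ⟨hs.1, hs.2.trans ?_⟩
        exact ENNReal.ofReal_le_ofReal hst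
      have hgm : Measurable (fun t : ℝ =>
          (ENNReal.ofReal t ^ (1 / p).toReal * rearr μ f t) ^ Q / ENNReal.ofReal t) :=
        (((ENNReal.measurable_ofReal.pow_const _).mul hrearr).pow_const Q).div
          ENNReal.measurable_ofReal
      -- lower bound for the norm
      have hI : A ^ Q * ENNReal.ofReal (t₀ ^ c / c)
          ≤ ∫⁻ t in Ioi (0:ℝ),
              (ENNReal.ofReal t ^ (1 / p).toReal * rearr μ f t) ^ Q / ENNReal.ofReal t := by
        calc A ^ Q * ENNReal.ofReal (t₀ ^ c / c)
            = ∫⁻ t in Ioc (0:ℝ) t₀, A ^ Q * ENNReal.ofReal (t ^ (c - 1)) := by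
              rw [lintegral_const_mul' _ _
                (ENNReal.rpow_ne_top_of_nonneg hQ.le hAtop), hlin]
          _ ≤ ∫⁻ t in Ioc (0:ℝ) t₀,
              (ENNReal.ofReal t ^ (1 / p).toReal * rearr μ f t) ^ Q / ENNReal.ofReal t :=
              setLIntegral_mono hgm hpt
          _ ≤ _ := lintegral_mono_set Ioc_subset_Ioi_self
      have hnorm : lorentzNorm μ f p q =
          (∫⁻ t in Ioi (0:ℝ),
            (ENNReal.ofReal t ^ (1 / p).toReal * rearr μ f t) ^ Q / ENNReal.ofReal t) ^ (1/Q) := by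
        rw [lorentzNorm, if_neg hq]
      rw [hnorm]
      refine le_trans ?_ (ENNReal.rpow_le_rpow hI (by positivity))
      -- simplify left side
      have h1 : t₀ * (p.toReal / Q) ≤ t₀ ^ c / c := by
        have h2 : t₀ ≤ t₀ ^ c := by
          have := Real.rpow_le_rpow_of_exponent_ge ht₀ ht₀1 hc1
          rwa [Real.rpow_one] at this
        have h3 : t₀ * (p.toReal / Q) = t₀ / c := by
          rw [hcdef]; field_simp
        rw [h3]
        gcongr
      refine le_trans (le_of_eq ?_) (ENNReal.rpow_le_rpow
        (mul_le_mul_right (ENNReal.ofReal_le_ofReal h1) (A ^ Q)) (by positivity))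
      rw [ENNReal.ofReal_mul ht₀.le, ← mul_assoc,
        ENNReal.mul_rpow_of_nonneg _ _ (by positivity),
        ENNReal.mul_rpow_of_nonneg _ _ (by positivity),
        ← ENNReal.rpow_mul, mul_one_div_cancel hQ.ne', ENNReal.rpow_one]
    -- derive a contradiction with the uniform bound
    set S := ⨆ p ∈ J, lorentzNorm μ f p q with hS
    set K := A * ENNReal.ofReal t₀ ^ (1 / Q) with hK
    have hK0 : K ≠ 0 := by
      apply mul_ne_zero hA0
      exact (ENNReal.rpow_pos (ENNReal.ofReal_pos.mpr ht₀) ENNReal.ofReal_ne_top).ne'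
    have hKtop : K ≠ ∞ := by
      apply ENNReal.mul_ne_top hAtop
      exact (ENNReal.rpow_ne_top_of_nonneg (by positivity) ENNReal.ofReal_ne_top)
    have hSK : S / K < ∞ := ENNReal.div_lt_top hsup.ne hK0
    set M := (S / K).toReal + 1 with hM'
    have hM0 : 0 < M := by positivity
    set N := M ^ Q * Q + Q with hN
    have hN0 : 0 ≤ N := by positivity
    -- find p ∈ J with p.toReal > N
    obtain ⟨p, hpJ, hpN⟩ : ∃ p ∈ J, ENNReal.ofReal N < p := by
      by_contra h
      push_neg at h
      have : sSup J ≤ ENNReal.ofReal N := sSup_le h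
      rw [hM] at this
      exact absurd this (by simp)
    obtain ⟨hp0, hptop⟩ := hJ hpJ
    have hpR : N < p.toReal := by
      have := (ENNReal.toReal_lt_toReal ENNReal.ofReal_ne_top hptop.ne).mpr hpN
      rwa [ENNReal.toReal_ofReal hN0] at this
    have hpQ : Q ≤ p.toReal := by nlinarith [Real.rpow_nonneg hM0.le Q]
    have hle := hbound p hpJ hpQ
    have hle2 : lorentzNorm μ f p q ≤ S :=
      le_biSup (fun p => lorentzNorm μ f p q) hpJ
    -- lower bound the extra factor
    have hfac : ENNReal.ofReal M ≤ ENNReal.ofReal (p.toReal / Q) ^ (1 / Q) := by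
      have h1 : M ^ Q ≤ p.toReal / Q := by
        rw [le_div_iff₀ hQ]; nlinarith
      calc ENNReal.ofReal M = (ENNReal.ofReal M ^ Q) ^ (1/Q) := by
            rw [← ENNReal.rpow_mul, mul_one_div_cancel hQ.ne', ENNReal.rpow_one]
        _ = ENNReal.ofReal (M ^ Q) ^ (1/Q) := by
            rw [ENNReal.ofReal_rpow_of_pos hM0]
        _ ≤ _ := ENNReal.rpow_le_rpow (ENNReal.ofReal_le_ofReal h1) (by positivity)
    have hcon : K * ENNReal.ofReal M ≤ S := by
      calc K * ENNReal.ofReal M ≤ K * ENNReal.ofReal (p.toReal / Q) ^ (1/Q) :=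
            mul_le_mul_right hfac K
        _ ≤ lorentzNorm μ f p q := hle
        _ ≤ S := hle2
    have hcon2 : S < K * ENNReal.ofReal M := by
      have h1 : S / K < ENNReal.ofReal M := by
        calc S / K = ENNReal.ofReal (S / K).toReal := (ENNReal.ofReal_toReal hSK.ne).symm
          _ < ENNReal.ofReal M := ENNReal.ofReal_lt_ofReal_iff hM0 |>.mpr (by simp [hM'])
      rw [ENNReal.div_lt_iff (Or.inl hK0) (Or.inl hKtop)] at h1
      rwa [mul_comm] at h1
    exact absurd hcon hcon2.not_ge
  -- conclude f = 0 a.e.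
  have hnull : μ {x | f x ≠ 0} = 0 := by
    have hsub : {x | f x ≠ 0} ⊆ ⋃ n : ℕ, {x | 1 / (n + 1 : ℝ) < |f x|} := by
      intro x hx
      obtain ⟨n, hn⟩ := exists_nat_one_div_lt (abs_pos.mpr hx)
      exact mem_iUnion.mpr ⟨n, hn⟩
    exact measure_mono_null hsub
      (measure_iUnion_null fun n => key _ (by positivity))
  rw [Filter.EventuallyEq, ae_iff]
  simpa using hnull
end
end

section
/- Let J,Q ⊆ [1,∞) be nonempty sets with m_J = inf J and m_Q = inf Q. Then IL_{J,Q} = ℓ_{m_J,m_Q}, where IL_{J,Q} = {(x_i) ∈ ⋂_{p∈J,q∈Q} ℓ_{p,q} : sup_{p∈J,q∈Q} ‖(x_i)‖_{p,q} < ∞}. -/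
open Set ENNReal Filter

noncomputable section

/-- The non-increasing rearrangement of `(|x i|)`, 0-indexed: the `k`-th value is
`inf {s > 0 : #{j : |x j| > s} ≤ k}`, with `inf ∅ = ∞`. -/
def seqRearr (x : ℕ → ℝ) (k : ℕ) : ℝ≥0∞ :=
  ⨅ (s : ℝ) (_ : 0 < s ∧ MeasureTheory.Measure.count {j : ℕ | s < |x j|} ≤ (k : ℝ≥0∞)),
    ENNReal.ofReal s

/-- The Lorentz sequence quasi-norm `‖x‖_{p,q}`; the `i`-th (1-based) term of the
non-increasing rearrangement is `seqRearr x (i - 1)`, i.e. `seqRearr x k` with `i = k + 1`. -/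
def seqLorentzNorm (x : ℕ → ℝ) (p q : ℝ≥0∞) : ℝ≥0∞ :=
  if q = ∞ then ⨆ k : ℕ, ((k : ℝ≥0∞) + 1) ^ (1 / p).toReal * seqRearr x k
  else (∑' k : ℕ, ((k : ℝ≥0∞) + 1) ^ ((q / p).toReal - 1) * seqRearr x k ^ q.toReal) ^
    (1 / q.toReal)

/-- The Lorentz sequence space `ℓ_{p,q}`: null sequences with finite Lorentz quasi-norm. -/
def seqLorentz (p q : ℝ≥0∞) : Set (ℕ → ℝ) :=
  {x | Tendsto x atTop (nhds 0) ∧ seqLorentzNorm x p q < ∞}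

lemma seqRearr_antitone (x : ℕ → ℝ) : Antitone (seqRearr x) := by
  intro k l hkl
  refine le_iInf₂ fun s hs => ?_
  exact iInf₂_le s ⟨hs.1, hs.2.trans (by exact_mod_cast Nat.cast_le.2 hkl)⟩

lemma seqRearr_lt_top {x : ℕ → ℝ} (hx : Tendsto x atTop (nhds 0)) (k : ℕ) :
    seqRearr x k < ∞ := by
  obtain ⟨M, hM⟩ : BddAbove (Set.range fun j => |x j|) := by
    have : Tendsto (fun j => |x j|) atTop (nhds 0) := by simpa using hx.abs
    exact this.bddAbove_range
  have hMle : ∀ j, |x j| ≤ M := fun j => hM ⟨j, rfl⟩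
  have hM0 : 0 ≤ M := le_trans (abs_nonneg _) (hMle 0)
  have : seqRearr x k ≤ ENNReal.ofReal (M + 1) := by
    refine iInf₂_le (M + 1) ⟨by linarith, ?_⟩
    have : {j : ℕ | M + 1 < |x j|} = ∅ := by
      ext j; simp only [mem_setOf_eq, mem_empty_iff_false, iff_false, not_lt]
      linarith [hMle j]
    simp [this]
  exact lt_of_le_of_lt this (by simp)

lemma aux_ge_one {α : ℝ} (h1 : 1 ≤ α) (k : ℕ) :
    ((k : ℝ) + 1) ^ α ≤ α * ∑ i ∈ Finset.range (k + 1), ((i : ℝ) + 1) ^ (α - 1) := by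
  induction k with
  | zero =>
    simp only [Finset.range_one, Finset.sum_singleton, Nat.cast_zero]
    norm_num
    exact h1
  | succ k ih =>
    have hb : (0:ℝ) < (k : ℝ) + 2 := by positivity
    have hexp : ((k:ℝ) + 2) ^ α = ((k:ℝ) + 2) * ((k:ℝ) + 2) ^ (α - 1) := by
      nth_rewrite 1 [show α = 1 + (α - 1) by ring]
      rw [Real.rpow_add hb, Real.rpow_one]
    have key : ((k : ℝ) + 2) ^ α - ((k : ℝ) + 1) ^ α ≤ α * ((k : ℝ) + 2) ^ (α - 1) := by
      have hs : (-1 : ℝ) ≤ -(1 / ((k : ℝ) + 2)) := by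
        rw [neg_le_neg_iff, div_le_one hb]; linarith
      have hber := one_add_mul_self_le_rpow_one_add hs h1
      have h1s : (1 : ℝ) + -(1 / ((k : ℝ) + 2)) = ((k : ℝ) + 1) / ((k : ℝ) + 2) := by
        field_simp
        ring
      rw [h1s, Real.div_rpow (by positivity) hb.le] at hber
      have hpow : (0:ℝ) < ((k : ℝ) + 2) ^ α := Real.rpow_pos_of_pos hb _
      have h2 := mul_le_mul_of_nonneg_right hber hpow.le
      rw [div_mul_cancel₀ _ hpow.ne'] at h2
      rw [hexp] at h2
      have h3 : α * (1 / ((k:ℝ)+2)) * (((k:ℝ)+2) * ((k:ℝ)+2) ^ (α-1))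
          = α * ((k:ℝ)+2) ^ (α-1) := by field_simp
      rw [hexp]
      nlinarith [h2, h3]
    rw [Finset.sum_range_succ, mul_add]
    push_cast
    rw [show ((k:ℝ) + 1 + 1) = (k:ℝ) + 2 by ring]
    linarith [ih, key]

lemma real_sum_rpow {α : ℝ} (hα : 0 < α) (k : ℕ) :
    ((k : ℝ) + 1) ^ α ≤ max 1 α * ∑ i ∈ Finset.range (k + 1), ((i : ℝ) + 1) ^ (α - 1) := by
  rcases le_total α 1 with h1 | h1
  · rw [max_eq_left h1, one_mul]
    have hterm : ∀ i ∈ Finset.range (k + 1), ((k : ℝ) + 1) ^ (α - 1) ≤ ((i : ℝ) + 1) ^ (α - 1) := by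
      intro i hi
      have hik : (i : ℝ) ≤ k := by exact_mod_cast Nat.lt_succ_iff.1 (Finset.mem_range.1 hi)
      exact Real.rpow_le_rpow_of_nonpos (by positivity) (by linarith) (by linarith)
    calc ((k : ℝ) + 1) ^ α = ((k : ℝ) + 1) ^ (1 + (α - 1)) := by ring_nf
      _ = ((k : ℝ) + 1) ^ (1:ℝ) * ((k : ℝ) + 1) ^ (α - 1) := Real.rpow_add (by positivity) _ _
      _ = ∑ _i ∈ Finset.range (k + 1), ((k : ℝ) + 1) ^ (α - 1) := by
          rw [Real.rpow_one, Finset.sum_const, Finset.card_range]; push_cast; ring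
      _ ≤ _ := Finset.sum_le_sum hterm
  · rw [max_eq_right h1]; exact aux_ge_one h1 k

lemma ennreal_sum_rpow {α : ℝ} (hα : 0 < α) (k : ℕ) :
    ((k : ℝ≥0∞) + 1) ^ α
      ≤ ENNReal.ofReal (max 1 α) * ∑ i ∈ Finset.range (k + 1), ((i : ℝ≥0∞) + 1) ^ (α - 1) := by
  have hcast : ∀ (j : ℕ) (β : ℝ), ((j : ℝ≥0∞) + 1) ^ β = ENNReal.ofReal (((j : ℝ) + 1) ^ β) := by
    intro j β
    rw [show ((j : ℝ≥0∞) + 1) = ENNReal.ofReal ((j : ℝ) + 1) by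
      rw [ENNReal.ofReal_add (by positivity) zero_le_one]; simp]
    exact ENNReal.ofReal_rpow_of_pos (by positivity)
  rw [hcast]
  have : ∑ i ∈ Finset.range (k + 1), ((i : ℝ≥0∞) + 1) ^ (α - 1)
      = ENNReal.ofReal (∑ i ∈ Finset.range (k + 1), ((i : ℝ) + 1) ^ (α - 1)) := by
    rw [ENNReal.ofReal_sum_of_nonneg]
    · exact Finset.sum_congr rfl fun i _ => hcast i _
    · intro i _; positivity
  rw [this, ← ENNReal.ofReal_mul (by positivity)]
  exact ENNReal.ofReal_le_ofReal (real_sum_rpow hα k)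

lemma tendsto_rpow_exp {b : ℝ≥0∞} (hb0 : b ≠ 0) (hbt : b ≠ ∞) {e : ℕ → ℝ} {l : ℝ}
    (he : Tendsto e atTop (nhds l)) :
    Tendsto (fun n => b ^ e n) atTop (nhds (b ^ l)) := by
  set c := b.toReal with hc
  have hc0 : 0 < c := ENNReal.toReal_pos hb0 hbt
  have hb : b = ENNReal.ofReal c := by rw [hc, ENNReal.ofReal_toReal hbt]
  have key : ∀ y : ℝ, b ^ y = ENNReal.ofReal (c ^ y) := by
    intro y; rw [hb, ENNReal.ofReal_rpow_of_pos hc0]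
  simp only [key]
  refine ENNReal.continuous_ofReal.continuousAt.tendsto.comp ?_
  have : Continuous fun y : ℝ => c ^ y := by
    have : (fun y : ℝ => c ^ y) = fun y => Real.exp (Real.log c * y) := by
      funext y; rw [Real.rpow_def_of_pos hc0]
    rw [this]
    exact Real.continuous_exp.comp (continuous_const.mul continuous_id)
  exact (this.continuousAt.tendsto).comp he

lemma rpow_le_max_one (b : ℝ≥0∞) {e : ℝ} (he0 : 0 ≤ e) (he1 : e ≤ 1) :
    b ^ e ≤ max 1 b := by
  rcases le_total b 1 with hb | hb
  · exact le_max_of_le_left (ENNReal.rpow_le_one hb he0)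
  · calc b ^ e ≤ b ^ (1:ℝ) := ENNReal.rpow_le_rpow_of_exponent_le hb he1
      _ = b := ENNReal.rpow_one b
      _ ≤ max 1 b := le_max_right _ _

lemma ennreal_tsum_le_liminf {f : ℕ → ℕ → ℝ≥0∞} {g : ℕ → ℝ≥0∞}
    (h : ∀ k, Tendsto (fun n => f n k) atTop (nhds (g k))) :
    ∑' k, g k ≤ Filter.liminf (fun n => ∑' k, f n k) atTop := by
  have hm : ∀ n, Measurable (f n) := fun n => measurable_of_countable _
  have := MeasureTheory.lintegral_liminf_le (μ := MeasureTheory.Measure.count (α := ℕ)) (u := atTop) hm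
  simp only [MeasureTheory.lintegral_count] at this
  calc ∑' k, g k = ∑' k, Filter.liminf (fun n => f n k) atTop := by
        congr 1; funext k; exact ((h k).liminf_eq).symm
    _ ≤ _ := this

lemma lorentz_anti_p {x : ℕ → ℝ} {p₁ p₂ q : ℝ≥0∞} (h1 : 1 ≤ p₁) (hle : p₁ ≤ p₂)
    (hqt : q ≠ ∞) : seqLorentzNorm x p₂ q ≤ seqLorentzNorm x p₁ q := by
  rw [seqLorentzNorm, seqLorentzNorm, if_neg hqt, if_neg hqt]
  refine ENNReal.rpow_le_rpow ?_ (by positivity)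
  refine ENNReal.tsum_le_tsum fun k => mul_le_mul_left ?_ _
  refine ENNReal.rpow_le_rpow_of_exponent_le (by simp) (sub_le_sub_right ?_ 1)
  refine ENNReal.toReal_mono ?_ (ENNReal.div_le_div_left hle q)
  rw [Ne, ENNReal.div_eq_top]
  push_neg
  exact ⟨fun _ => by intro h0; exact absurd (h0 ▸ h1) (by simp), fun hq => absurd hq hqt⟩

lemma lorentz_embed {x : ℕ → ℝ} {p r q : ℝ≥0∞} (hp1 : 1 ≤ p) (hpt : p ≠ ∞)
    (hr1 : 1 ≤ r) (hrt : r ≠ ∞) (hrq : r ≤ q) (hqt : q ≠ ∞)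
    (hfin : ∀ k, seqRearr x k ≠ ∞) :
    seqLorentzNorm x p q ≤ max 1 (seqLorentzNorm x p r ^ r.toReal) *
      max 1 (ENNReal.ofReal (max 1 ((r / p).toReal)) ^ (1 / r.toReal) * seqLorentzNorm x p r) := by
  set a := seqRearr x with ha_def
  have ha : Antitone a := seqRearr_antitone x
  set P := p.toReal with hP
  set R := r.toReal with hR
  set Qr := q.toReal with hQr
  have hp0 : p ≠ 0 := fun h => by simp [h] at hp1
  have hP1 : 1 ≤ P := by
    rw [hP, ← ENNReal.toReal_one]; exact ENNReal.toReal_mono hpt hp1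
  have hR1 : 1 ≤ R := by
    rw [hR, ← ENNReal.toReal_one]; exact ENNReal.toReal_mono hrt hr1
  have hQ1 : 1 ≤ Qr := by
    rw [hQr, ← ENNReal.toReal_one]; exact ENNReal.toReal_mono hqt (hr1.trans hrq)
  have hRQ : R ≤ Qr := ENNReal.toReal_mono hqt hrq
  set α := (r / p).toReal with hαdef
  have hα : α = R / P := by rw [hαdef, ENNReal.toReal_div]
  have hα0 : 0 < α := by rw [hα]; positivity
  set c := ENNReal.ofReal (max 1 α) with hc
  set A' := ∑' k : ℕ, ((k : ℝ≥0∞) + 1) ^ (α - 1) * a k ^ R with hA'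
  set M := (c * A') ^ (1 / R) with hM
  -- Step 1
  have step1 : ∀ k : ℕ, a k ^ R * ((k : ℝ≥0∞) + 1) ^ α ≤ c * A' := by
    intro k
    calc a k ^ R * ((k : ℝ≥0∞) + 1) ^ α
        ≤ a k ^ R * (c * ∑ i ∈ Finset.range (k + 1), ((i : ℝ≥0∞) + 1) ^ (α - 1)) :=
          mul_le_mul_right (ennreal_sum_rpow hα0 k) _
      _ = c * ∑ i ∈ Finset.range (k + 1), ((i : ℝ≥0∞) + 1) ^ (α - 1) * a k ^ R := by
          rw [mul_left_comm]
          congr 1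
          rw [mul_comm, Finset.sum_mul]
      _ ≤ c * ∑ i ∈ Finset.range (k + 1), ((i : ℝ≥0∞) + 1) ^ (α - 1) * a i ^ R := by
          refine mul_le_mul_right (Finset.sum_le_sum fun i hi => ?_) _
          refine mul_le_mul_right (ENNReal.rpow_le_rpow (ha ?_) (by linarith)) _
          exact Nat.lt_succ_iff.1 (Finset.mem_range.1 hi)
      _ ≤ c * A' := mul_le_mul_right (ENNReal.sum_le_tsum _) _
  -- Step 2
  have step2 : ∀ k : ℕ, ((k : ℝ≥0∞) + 1) ^ (1 / P) * a k ≤ M := by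
    intro k
    have h := ENNReal.rpow_le_rpow (step1 k) (by positivity : (0:ℝ) ≤ 1 / R)
    rw [ENNReal.mul_rpow_of_nonneg _ _ (by positivity : (0:ℝ) ≤ 1 / R),
      ← ENNReal.rpow_mul, ← ENNReal.rpow_mul, mul_one_div_cancel (by linarith : R ≠ 0),
      ENNReal.rpow_one] at h
    have hexp : α * (1 / R) = 1 / P := by
      rw [hα]; field_simp
    rw [hexp] at h
    rw [mul_comm]
    exact h
  -- Step 3: termwise bound for exponent Qr
  have step3 : ∀ k : ℕ, ((k : ℝ≥0∞) + 1) ^ ((q / p).toReal - 1) * a k ^ Qr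
      ≤ (((k : ℝ≥0∞) + 1) ^ (α - 1) * a k ^ R) * M ^ (Qr - R) := by
    intro k
    rcases eq_or_ne (a k) 0 with h0 | h0
    · rw [h0, ENNReal.zero_rpow_of_pos (by linarith : (0:ℝ) < Qr), mul_zero]
      exact zero_le
    · have hk0 : ((k : ℝ≥0∞) + 1) ≠ 0 := by simp
      have hkt : ((k : ℝ≥0∞) + 1) ≠ ∞ := by simp [ENNReal.add_ne_top]
      have hqp : (q / p).toReal = Qr / P := by rw [ENNReal.toReal_div]
      have e1 : (q / p).toReal - 1 = (α - 1) + (Qr - R) * (1 / P) := by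
        rw [hqp, hα]; field_simp; ring
      have e2 : Qr = R + (Qr - R) := by ring
      calc ((k : ℝ≥0∞) + 1) ^ ((q / p).toReal - 1) * a k ^ Qr
          = (((k : ℝ≥0∞) + 1) ^ (α - 1) * ((k : ℝ≥0∞) + 1) ^ ((Qr - R) * (1 / P)))
            * (a k ^ R * a k ^ (Qr - R)) := by
            rw [e1, ENNReal.rpow_add _ _ hk0 hkt]
            nth_rewrite 2 [e2]
            rw [ENNReal.rpow_add _ _ h0 (hfin k)]
        _ = (((k : ℝ≥0∞) + 1) ^ (α - 1) * a k ^ R)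
            * (((k : ℝ≥0∞) + 1) ^ (1 / P) * a k) ^ (Qr - R) := by
            rw [ENNReal.mul_rpow_of_nonneg _ _ (by linarith : (0:ℝ) ≤ Qr - R),
              ← ENNReal.rpow_mul]
            rw [show (1 / P) * (Qr - R) = (Qr - R) * (1 / P) by ring]
            ring
        _ ≤ (((k : ℝ≥0∞) + 1) ^ (α - 1) * a k ^ R) * M ^ (Qr - R) :=
            mul_le_mul_right (ENNReal.rpow_le_rpow (step2 k) (by linarith)) _
  -- Conclude
  have hTq : seqLorentzNorm x p q
      = (∑' k : ℕ, ((k : ℝ≥0∞) + 1) ^ ((q / p).toReal - 1) * a k ^ Qr) ^ (1 / Qr) := by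
    rw [seqLorentzNorm, if_neg hqt]
  have hTr : seqLorentzNorm x p r = A' ^ (1 / R) := by
    rw [seqLorentzNorm, if_neg hrt]
  have hsum : (∑' k : ℕ, ((k : ℝ≥0∞) + 1) ^ ((q / p).toReal - 1) * a k ^ Qr)
      ≤ A' * M ^ (Qr - R) := by
    calc _ ≤ ∑' k : ℕ, (((k : ℝ≥0∞) + 1) ^ (α - 1) * a k ^ R) * M ^ (Qr - R) :=
          ENNReal.tsum_le_tsum step3
      _ = A' * M ^ (Qr - R) := ENNReal.tsum_mul_right
  rw [hTq, hTr]
  calc (∑' k : ℕ, ((k : ℝ≥0∞) + 1) ^ ((q / p).toReal - 1) * a k ^ Qr) ^ (1 / Qr)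
      ≤ (A' * M ^ (Qr - R)) ^ (1 / Qr) := ENNReal.rpow_le_rpow hsum (by positivity)
    _ = A' ^ (1 / Qr) * M ^ ((Qr - R) * (1 / Qr)) := by
        rw [ENNReal.mul_rpow_of_nonneg _ _ (by positivity : (0:ℝ) ≤ 1 / Qr),
          ← ENNReal.rpow_mul]
    _ ≤ max 1 A' * max 1 M := by
        refine mul_le_mul' (rpow_le_max_one _ (by positivity) ?_)
          (rpow_le_max_one _ ?_ ?_)
        · rw [div_le_one (by linarith : (0:ℝ) < Qr)]; linarith
        · have : 0 ≤ Qr - R := by linarith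
          positivity
        · rw [mul_one_div, div_le_one (by linarith : (0:ℝ) < Qr)]; linarith
    _ = max 1 ((A' ^ (1 / R)) ^ R) * max 1 (c ^ (1 / R) * A' ^ (1 / R)) := by
        rw [← ENNReal.rpow_mul, one_div_mul_cancel (by linarith : R ≠ 0), ENNReal.rpow_one,
          ← ENNReal.mul_rpow_of_nonneg _ _ (by positivity : (0:ℝ) ≤ 1 / R), ← hM]

lemma exists_seq_tendsto_sInf' {S : Set ℝ≥0∞} (hne : S.Nonempty) (ht : sInf S ≠ ∞) :
    ∃ u : ℕ → ℝ≥0∞, (∀ n, u n ∈ S) ∧ Tendsto u atTop (nhds (sInf S)) ∧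
      ∀ n, u n ≤ sInf S + 1 := by
  have hsel : ∀ n : ℕ, ∃ v ∈ S, v ≤ sInf S + ((n : ℝ≥0∞) + 1)⁻¹ := by
    intro n
    have hlt : sInf S < sInf S + ((n : ℝ≥0∞) + 1)⁻¹ :=
      ENNReal.lt_add_right ht (by simp)
    obtain ⟨v, hv, hvlt⟩ := sInf_lt_iff.1 hlt
    exact ⟨v, hv, hvlt.le⟩
  choose u hu hub using hsel
  have hinv : Tendsto (fun n : ℕ => ((n : ℝ≥0∞) + 1)⁻¹) atTop (nhds 0) := by
    have h := ENNReal.tendsto_inv_nat_nhds_zero.comp (tendsto_add_atTop_nat 1)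
    refine h.congr fun n => ?_
    simp [Function.comp]
  have hupper : Tendsto (fun n : ℕ => sInf S + ((n : ℝ≥0∞) + 1)⁻¹) atTop (nhds (sInf S)) := by
    have h2 := Tendsto.add
      (tendsto_const_nhds : Tendsto (fun _ : ℕ => sInf S) atTop (nhds (sInf S))) hinv
    simpa using h2
  refine ⟨u, hu, ?_, fun n => (hub n).trans (add_le_add_right (by
    simp [ENNReal.inv_le_one]) _)⟩
  exact tendsto_of_tendsto_of_tendsto_of_le_of_le tendsto_const_nhds hupper
    (fun n => sInf_le (hu n)) hub

/-- `IL_{J,Q} = ℓ_{m_J,m_Q}` for nonempty `J, Q ⊆ [1,∞)`. -/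
theorem stmt16 (J Q : Set ℝ≥0∞) (hJne : J.Nonempty) (hQne : Q.Nonempty)
    (hJ : J ⊆ Ico 1 ∞) (hQ : Q ⊆ Ico 1 ∞) :
    {x : ℕ → ℝ | (∀ p ∈ J, ∀ q ∈ Q, x ∈ seqLorentz p q) ∧
        (⨆ p ∈ J, ⨆ q ∈ Q, seqLorentzNorm x p q) < ∞}
      = seqLorentz (sInf J) (sInf Q) := by
  obtain ⟨p₀, hp₀⟩ := hJne
  obtain ⟨q₀, hq₀⟩ := hQne
  have hmJ1 : 1 ≤ sInf J := le_sInf fun p hp => (hJ hp).1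
  have hmQ1 : 1 ≤ sInf Q := le_sInf fun q hq => (hQ hq).1
  have hmJt : sInf J ≠ ∞ := ((sInf_le hp₀).trans_lt (hJ hp₀).2).ne
  have hmQt : sInf Q ≠ ∞ := ((sInf_le hq₀).trans_lt (hQ hq₀).2).ne
  have htr : ∀ v : ℝ≥0∞, 1 ≤ v → v ≠ ∞ → 1 ≤ v.toReal := by
    intro v h1 hvt
    rw [← ENNReal.toReal_one]
    exact ENNReal.toReal_mono hvt h1
  have hmQ1' : 1 ≤ (sInf Q).toReal := htr _ hmQ1 hmQt
  ext x
  simp only [Set.mem_setOf_eq, seqLorentz]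
  constructor
  · rintro ⟨hmem, hsup⟩
    have htend := (hmem p₀ hp₀ q₀ hq₀).1
    refine ⟨htend, ?_⟩
    have hxk : ∀ k, seqRearr x k ≠ ∞ := fun k => (seqRearr_lt_top htend k).ne
    set S := ⨆ p ∈ J, ⨆ q ∈ Q, seqLorentzNorm x p q with hS
    have hNle : ∀ p ∈ J, ∀ q ∈ Q, seqLorentzNorm x p q ≤ S := fun p hp q hq =>
      le_iSup₂_of_le p hp (le_iSup₂_of_le q hq le_rfl)
    obtain ⟨pn, hpnJ, hpn, -⟩ := exists_seq_tendsto_sInf' ⟨p₀, hp₀⟩ hmJt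
    obtain ⟨qn, hqnQ, hqn, hqnb⟩ := exists_seq_tendsto_sInf' ⟨q₀, hq₀⟩ hmQt
    have hdivt : sInf Q / sInf J ≠ ∞ := by
      rw [Ne, ENNReal.div_eq_top]
      push_neg
      refine ⟨fun _ => ?_, fun h => absurd h hmQt⟩
      intro h0
      exact absurd (h0 ▸ hmJ1) (by simp)
    have hterm : ∀ k : ℕ, Tendsto
        (fun n => ((k : ℝ≥0∞) + 1) ^ ((qn n / pn n).toReal - 1) * seqRearr x k ^ (qn n).toReal)
        atTop (nhds (((k : ℝ≥0∞) + 1) ^ ((sInf Q / sInf J).toReal - 1)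
          * seqRearr x k ^ (sInf Q).toReal)) := by
      intro k
      have hdiv : Tendsto (fun n => qn n / pn n) atTop (nhds (sInf Q / sInf J)) :=
        ENNReal.Tendsto.div hqn (Or.inl (by intro h; exact absurd (h ▸ hmQ1) (by simp)))
          hpn (Or.inl hmJt)
      have he : Tendsto (fun n => (qn n / pn n).toReal - 1) atTop
          (nhds ((sInf Q / sInf J).toReal - 1)) :=
        ((ENNReal.tendsto_toReal hdivt).comp hdiv).sub_const 1
      have h1 := tendsto_rpow_exp (b := (k : ℝ≥0∞) + 1) (by simp) (by simp) he
      have hq' : Tendsto (fun n => (qn n).toReal) atTop (nhds (sInf Q).toReal) :=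
        (ENNReal.tendsto_toReal hmQt).comp hqn
      have h2 : Tendsto (fun n => seqRearr x k ^ (qn n).toReal) atTop
          (nhds (seqRearr x k ^ (sInf Q).toReal)) := by
        rcases eq_or_ne (seqRearr x k) 0 with h0 | h0
        · rw [h0, ENNReal.zero_rpow_of_pos (by linarith : (0:ℝ) < (sInf Q).toReal)]
          refine Tendsto.congr (fun n => ?_) tendsto_const_nhds
          rw [ENNReal.zero_rpow_of_pos]
          have := htr _ (hQ (hqnQ n)).1 (hQ (hqnQ n)).2.ne
          linarith
        · exact tendsto_rpow_exp h0 (hxk k) hq'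
      have hb1 : ((k : ℝ≥0∞) + 1) ^ ((sInf Q / sInf J).toReal - 1) ≠ ∞ := by
        rw [Ne, ENNReal.rpow_eq_top_iff]
        push_neg
        exact ⟨fun h => absurd h (by simp), fun h => absurd h (by simp)⟩
      exact ENNReal.Tendsto.mul h1 (Or.inr (ENNReal.rpow_ne_top_of_nonneg
        (by linarith) (hxk k))) h2 (Or.inr hb1)
    have hfatou := ennreal_tsum_le_liminf hterm
    have hbnd : ∀ n, (∑' k : ℕ,
        ((k : ℝ≥0∞) + 1) ^ ((qn n / pn n).toReal - 1) * seqRearr x k ^ (qn n).toReal)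
        ≤ (max 1 S) ^ ((sInf Q).toReal + 1) := by
      intro n
      have hqnt : qn n ≠ ∞ := (hQ (hqnQ n)).2.ne
      have hq1' : 1 ≤ (qn n).toReal := htr _ (hQ (hqnQ n)).1 hqnt
      have heq : (∑' k : ℕ,
          ((k : ℝ≥0∞) + 1) ^ ((qn n / pn n).toReal - 1) * seqRearr x k ^ (qn n).toReal)
          = (seqLorentzNorm x (pn n) (qn n)) ^ (qn n).toReal := by
        rw [seqLorentzNorm, if_neg hqnt, ← ENNReal.rpow_mul,
          one_div_mul_cancel (by linarith : (qn n).toReal ≠ 0), ENNReal.rpow_one]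
      rw [heq]
      calc (seqLorentzNorm x (pn n) (qn n)) ^ (qn n).toReal
          ≤ (max 1 S) ^ (qn n).toReal :=
            ENNReal.rpow_le_rpow ((hNle _ (hpnJ n) _ (hqnQ n)).trans (le_max_right 1 S))
              (by linarith)
        _ ≤ (max 1 S) ^ ((sInf Q).toReal + 1) := by
            refine ENNReal.rpow_le_rpow_of_exponent_le (le_max_left 1 S) ?_
            have h1 : qn n ≤ sInf Q + 1 := hqnb n
            have := ENNReal.toReal_mono (by
              exact ENNReal.add_ne_top.2 ⟨hmQt, ENNReal.one_ne_top⟩) h1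
            rwa [ENNReal.toReal_add hmQt ENNReal.one_ne_top, ENNReal.toReal_one] at this
    have hSfin : max 1 S ≠ ∞ := by
      rw [Ne, max_eq_top]
      push_neg
      exact ⟨ENNReal.one_ne_top, hsup.ne⟩
    have hTle : (∑' k : ℕ, ((k : ℝ≥0∞) + 1) ^ ((sInf Q / sInf J).toReal - 1)
        * seqRearr x k ^ (sInf Q).toReal) ≤ (max 1 S) ^ ((sInf Q).toReal + 1) := by
      refine hfatou.trans ?_
      refine le_trans (liminf_le_liminf (Eventually.of_forall hbnd)) ?_
      rw [liminf_const]
    have hTfin : (∑' k : ℕ, ((k : ℝ≥0∞) + 1) ^ ((sInf Q / sInf J).toReal - 1)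
        * seqRearr x k ^ (sInf Q).toReal) ≠ ∞ :=
      (hTle.trans_lt (ENNReal.rpow_lt_top_of_nonneg (by linarith) hSfin)).ne
    rw [seqLorentzNorm, if_neg hmQt]
    exact ENNReal.rpow_lt_top_of_nonneg (by positivity) hTfin
  · rintro ⟨htend, hfin⟩
    have hxk : ∀ k, seqRearr x k ≠ ∞ := fun k => (seqRearr_lt_top htend k).ne
    set A := seqLorentzNorm x (sInf J) (sInf Q) with hA
    set C := max 1 (A ^ (sInf Q).toReal) *
      max 1 (ENNReal.ofReal (max 1 ((sInf Q / sInf J).toReal)) ^ (1 / (sInf Q).toReal) * A)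
      with hC
    have hCt : C ≠ ∞ := by
      have hAne : A ≠ ∞ := hfin.ne
      refine ENNReal.mul_ne_top ?_ ?_ <;> rw [Ne, max_eq_top] <;> push_neg <;>
        refine ⟨ENNReal.one_ne_top, ?_⟩
      · exact ENNReal.rpow_ne_top_of_nonneg ENNReal.toReal_nonneg hAne
      · exact ENNReal.mul_ne_top
          (ENNReal.rpow_ne_top_of_nonneg (by positivity) ENNReal.ofReal_ne_top) hAne
    have hbound : ∀ p ∈ J, ∀ q ∈ Q, seqLorentzNorm x p q ≤ C := by
      intro p hp q hq
      have h1 : seqLorentzNorm x p q ≤ seqLorentzNorm x (sInf J) q :=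
        lorentz_anti_p hmJ1 (sInf_le hp) (hQ hq).2.ne
      exact h1.trans (lorentz_embed hmJ1 hmJt hmQ1 hmQt (sInf_le hq) (hQ hq).2.ne hxk)
    refine ⟨fun p hp q hq => ⟨htend, (hbound p hp q hq).trans_lt hCt.lt_top⟩, ?_⟩
    exact (iSup₂_le fun p hp => iSup₂_le fun q hq => hbound p hp q hq).trans_lt hCt.lt_top
end
end

section
/- Let 1 ≤ p < ∞ and Q ⊆ [1,∞) nonempty with m_Q = inf Q. Then IL_{p,Q} = ℓ_{p,m_Q}, where IL_{p,Q} = {(x_i) ∈ ⋂_{q∈Q} ℓ_{p,q} : sup_{q∈Q} ‖(x_i)‖_{p,q} < ∞}; moreover, for every (x_i) ∈ ℓ_{p,m_Q}, ‖(x_i)‖_{p,m_Q} ≤ sup_{q∈Q} ‖(x_i)‖_{p,q} ≤ max{1, m_Q/p} · ‖(x_i)‖_{p,m_Q}. -/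
open Set ENNReal Filter

noncomputable section

lemma step_le (β : ℝ) (a b : ℝ) (ha : 0 < a) (hab : a ≤ b) (hb1 : a + 1 = b) :
    b ^ β - a ^ β ≤ max 1 β * b ^ (β-1) := by
  have hb : (0:ℝ) < b := by linarith
  have hx0 : (0:ℝ) < a / b := by positivity
  have hx1 : a / b ≤ 1 := by rw [div_le_one hb]; exact hab
  have hab' : a ^ β = b ^ β * (a/b) ^ β := by
    rw [← Real.mul_rpow hb.le hx0.le, mul_div_cancel₀ _ hb.ne']
  have hbb : b ^ (β - 1) = b ^ β / b := by
    rw [Real.rpow_sub hb, Real.rpow_one]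
  rcases le_total β 1 with h1 | h1
  · have hx : a / b ≤ (a/b) ^ β := by
      calc a / b = (a/b) ^ (1:ℝ) := (Real.rpow_one _).symm
        _ ≤ (a/b) ^ β := Real.rpow_le_rpow_of_exponent_ge hx0 hx1 h1
    have : b ^ β - a ^ β ≤ b ^ (β - 1) := by
      rw [hab', hbb]
      have hbp : (0:ℝ) ≤ b ^ β := (Real.rpow_pos_of_pos hb β).le
      have h2 : b ^ β * (a/b) ≤ b ^ β * (a/b) ^ β := by
        exact mul_le_mul_of_nonneg_left hx hbp
      have h3 : b ^ β * (a/b) = b ^ β - b ^ β / b := by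
        field_simp; ring_nf; rw [← hb1]; ring
      nlinarith [h2, h3]
    calc b ^ β - a ^ β ≤ 1 * b ^ (β-1) := by rw [one_mul]; exact this
      _ ≤ max 1 β * b ^ (β-1) :=
        mul_le_mul_of_nonneg_right (le_max_left 1 β) (Real.rpow_pos_of_pos hb _).le
  · -- Bernoulli
    have hs : (-1:ℝ) ≤ -(1/b) := by
      have : 1/b ≤ 1 := by rw [div_le_one hb]; linarith
      linarith
    have hber := one_add_mul_self_le_rpow_one_add hs h1
    have h1b : (1:ℝ) + -(1/b) = a / b := by field_simp; linarith
    rw [h1b] at hber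
    -- hber : 1 + β * (-(1/b)) ≤ (a/b)^β
    have h2 : b ^ β * (1 + β * -(1/b)) ≤ a ^ β := by
      rw [hab']
      exact mul_le_mul_of_nonneg_left hber (Real.rpow_pos_of_pos hb β).le
    have h3 : b ^ β * (1 + β * -(1/b)) = b ^ β - β * (b ^ β / b) := by
      field_simp; ring
    rw [h3] at h2
    have : b ^ β - a ^ β ≤ β * b ^ (β - 1) := by rw [hbb]; linarith
    calc b ^ β - a ^ β ≤ β * b ^ (β-1) := this
      _ ≤ max 1 β * b ^ (β-1) :=
        mul_le_mul_of_nonneg_right (le_max_right 1 β) (Real.rpow_pos_of_pos hb _).le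

lemma sumB_le (β : ℝ) (n : ℕ) :
    ((n:ℝ)+1) ^ β ≤ max 1 β * ∑ k ∈ Finset.range (n+1), ((k:ℝ)+1) ^ (β-1) := by
  induction n with
  | zero =>
    simp only [Finset.range_one, Finset.sum_singleton, Nat.cast_zero, zero_add,
      Real.one_rpow, mul_one]
    exact le_max_left 1 β
  | succ n ih =>
    rw [Finset.sum_range_succ, mul_add]
    push_cast
    have key := step_le β ((n:ℝ)+1) ((n:ℝ)+1+1) (by positivity) (by linarith) rfl
    have := add_le_add ih (le_refl (max 1 β * ((n:ℝ)+1+1) ^ (β-1)))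
    nlinarith [key, ih]


lemma coe_succ_rpow (k : ℕ) (γ : ℝ) :
    ((k:ℝ≥0∞)+1) ^ γ = ENNReal.ofReal (((k:ℝ)+1) ^ γ) := by
  rw [← ENNReal.ofReal_rpow_of_pos (by positivity)]
  congr 1
  rw [ENNReal.ofReal_add (by positivity) zero_le_one, ENNReal.ofReal_natCast,
    ENNReal.ofReal_one]

lemma lemA {a : ℕ → ℝ≥0∞} (ha : Antitone a) {β t : ℝ} (hβ : 0 < β) (ht : 0 ≤ t) (n : ℕ) :
    ((n:ℝ≥0∞)+1) ^ β * a n ^ t ≤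
      ENNReal.ofReal (max 1 β) * ∑' (k : ℕ), ((k:ℝ≥0∞)+1) ^ (β-1) * a k ^ t := by
  have h2 : ((n:ℝ≥0∞)+1) ^ β ≤
      ENNReal.ofReal (max 1 β) * ∑ k ∈ Finset.range (n+1), ((k:ℝ≥0∞)+1) ^ (β-1) := by
    have : ∑ k ∈ Finset.range (n+1), ((k:ℝ≥0∞)+1) ^ (β-1)
        = ENNReal.ofReal (∑ k ∈ Finset.range (n+1), ((k:ℝ)+1) ^ (β-1)) := by
      rw [ENNReal.ofReal_sum_of_nonneg (fun k _ => by positivity)]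
      exact Finset.sum_congr rfl fun k _ => coe_succ_rpow k (β-1)
    rw [this, coe_succ_rpow, ← ENNReal.ofReal_mul (le_max_of_le_left zero_le_one)]
    exact ENNReal.ofReal_le_ofReal (sumB_le β n)
  calc ((n:ℝ≥0∞)+1) ^ β * a n ^ t
      ≤ (ENNReal.ofReal (max 1 β) * ∑ k ∈ Finset.range (n+1), ((k:ℝ≥0∞)+1) ^ (β-1)) * a n ^ t :=
        mul_le_mul_left h2 _
    _ = ENNReal.ofReal (max 1 β) * ∑ k ∈ Finset.range (n+1), ((k:ℝ≥0∞)+1) ^ (β-1) * a n ^ t := by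
        rw [mul_assoc, Finset.sum_mul]
    _ ≤ ENNReal.ofReal (max 1 β) * ∑ k ∈ Finset.range (n+1), ((k:ℝ≥0∞)+1) ^ (β-1) * a k ^ t := by
        refine mul_le_mul_right (Finset.sum_le_sum fun k hk => ?_) _
        exact mul_le_mul_right (ENNReal.rpow_le_rpow (ha (Nat.le_of_lt_succ (Finset.mem_range.mp hk))) ht) _
    _ ≤ _ := mul_le_mul_right (ENNReal.sum_le_tsum _) _

lemma lemC {a : ℕ → ℝ≥0∞} (ha : Antitone a) (hfin : ∀ k, a k ≠ ∞) {P μ ρ : ℝ}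
    (hP : 1 ≤ P) (hμ : 1 ≤ μ) (hρ : μ ≤ ρ) :
    (∑' (k : ℕ), ((k:ℝ≥0∞)+1) ^ (ρ/P-1) * a k ^ ρ) ≤
      (ENNReal.ofReal (max 1 (μ/P)) * ∑' (k : ℕ), ((k:ℝ≥0∞)+1) ^ (μ/P-1) * a k ^ μ)
        ^ ((ρ-μ)/μ) * ∑' (k : ℕ), ((k:ℝ≥0∞)+1) ^ (μ/P-1) * a k ^ μ := by
  set S := ∑' (k : ℕ), ((k:ℝ≥0∞)+1) ^ (μ/P-1) * a k ^ μ with hS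
  set C := ENNReal.ofReal (max 1 (μ/P)) with hC
  have hP0 : (0:ℝ) < P := by linarith
  have hμ0 : (0:ℝ) < μ := by linarith
  have he : (0:ℝ) ≤ (ρ-μ)/μ := div_nonneg (by linarith) (by linarith)
  rw [← ENNReal.tsum_mul_left]
  refine ENNReal.tsum_le_tsum fun k => ?_
  by_cases h0 : a k = 0
  · rw [h0, ENNReal.zero_rpow_of_pos (by linarith), mul_zero]
    exact zero_le
  · have hkpos : (0:ℝ≥0∞) < (k:ℝ≥0∞)+1 := lt_of_lt_of_le one_pos le_add_self
    have hc0 : ((k:ℝ≥0∞)+1) ≠ 0 := hkpos.ne'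
    have hct : ((k:ℝ≥0∞)+1) ≠ ∞ := by
      exact ENNReal.add_ne_top.mpr ⟨ENNReal.natCast_ne_top k, ENNReal.one_ne_top⟩
    have key : ((k:ℝ≥0∞)+1) ^ (ρ/P-1) * a k ^ ρ =
        (((k:ℝ≥0∞)+1) ^ (μ/P) * a k ^ μ) ^ ((ρ-μ)/μ) *
          (((k:ℝ≥0∞)+1) ^ (μ/P-1) * a k ^ μ) := by
      rw [ENNReal.mul_rpow_of_nonneg _ _ he, ← ENNReal.rpow_mul, ← ENNReal.rpow_mul]
      have e1 : μ/P * ((ρ-μ)/μ) = (ρ-μ)/P := by field_simp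
      have e2 : μ * ((ρ-μ)/μ) = ρ-μ := by field_simp
      rw [e1, e2, mul_mul_mul_comm, ← ENNReal.rpow_add _ _ hc0 hct,
        ← ENNReal.rpow_add _ _ h0 (hfin k)]
      congr 2 <;> ring
    rw [key]
    exact mul_le_mul_left (ENNReal.rpow_le_rpow
      (lemA ha (by positivity) (by linarith) k) he) _

lemma lemC' {a : ℕ → ℝ≥0∞} (ha : Antitone a) (hfin : ∀ k, a k ≠ ∞) {P μ ρ : ℝ}
    (hP : 1 ≤ P) (hμ : 1 ≤ μ) (hρ : μ ≤ ρ) :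
    (∑' (k : ℕ), ((k:ℝ≥0∞)+1) ^ (ρ/P-1) * a k ^ ρ) ^ (1/ρ) ≤
      ENNReal.ofReal (max 1 (μ/P)) *
        (∑' (k : ℕ), ((k:ℝ≥0∞)+1) ^ (μ/P-1) * a k ^ μ) ^ (1/μ) := by
  set S := ∑' (k : ℕ), ((k:ℝ≥0∞)+1) ^ (μ/P-1) * a k ^ μ with hS
  set C := ENNReal.ofReal (max 1 (μ/P)) with hC
  have hμ0 : (0:ℝ) < μ := by linarith
  have hρ0 : (0:ℝ) < ρ := by linarith
  have hC1 : 1 ≤ C := by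
    rw [hC, ← ENNReal.ofReal_one]
    exact ENNReal.ofReal_le_ofReal (le_max_left _ _)
  rcases eq_or_ne S ∞ with hStop | hSne
  · refine le_trans le_top ?_
    rw [hStop, ENNReal.top_rpow_of_pos (by positivity)]
    rw [ENNReal.mul_top (by intro h; rw [h] at hC1; simp at hC1)]
  rcases eq_or_ne S 0 with hS0 | hSne0
  · -- all a k = 0, so LHS = 0
    have hak : ∀ k, a k = 0 := by
      intro k
      have hterm : ((k:ℝ≥0∞)+1) ^ (μ/P-1) * a k ^ μ = 0 :=
        le_antisymm (hS0 ▸ ENNReal.le_tsum k) (zero_le)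
      rcases mul_eq_zero.mp hterm with h | h
      · have hkpos : (0:ℝ≥0∞) < (k:ℝ≥0∞)+1 := lt_of_lt_of_le one_pos le_add_self
        have hct : ((k:ℝ≥0∞)+1) ≠ ∞ := ENNReal.add_ne_top.mpr ⟨ENNReal.natCast_ne_top k, ENNReal.one_ne_top⟩
        exact absurd h (ENNReal.rpow_pos hkpos hct).ne'
      · rcases ENNReal.rpow_eq_zero_iff.mp h with ⟨h1, _⟩ | ⟨_, h2⟩
        · exact h1
        · linarith
    have : (∑' (k : ℕ), ((k:ℝ≥0∞)+1) ^ (ρ/P-1) * a k ^ ρ) = 0 := by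
      simp [hak, ENNReal.zero_rpow_of_pos hρ0]
    rw [this, ENNReal.zero_rpow_of_pos (by positivity)]
    exact zero_le
  -- main case
  have h1 := lemC ha hfin hP hμ hρ
  have h2 : (∑' (k : ℕ), ((k:ℝ≥0∞)+1) ^ (ρ/P-1) * a k ^ ρ) ^ (1/ρ) ≤
      ((C * S) ^ ((ρ-μ)/μ) * S) ^ (1/ρ) :=
    ENNReal.rpow_le_rpow h1 (by positivity)
  refine h2.trans ?_
  rw [ENNReal.mul_rpow_of_nonneg _ _ (by positivity : (0:ℝ) ≤ 1/ρ),
    ENNReal.mul_rpow_of_nonneg _ _ (div_nonneg (by linarith) (by linarith) : (0:ℝ) ≤ (ρ-μ)/μ),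
    ENNReal.mul_rpow_of_nonneg _ _ (by positivity : (0:ℝ) ≤ 1/ρ),
    ← ENNReal.rpow_mul, ← ENNReal.rpow_mul, mul_assoc,
    ← ENNReal.rpow_add _ _ hSne0 hSne]
  have e3 : (ρ-μ)/μ * (1/ρ) + 1/ρ = 1/μ := by field_simp; ring
  rw [e3]
  refine mul_le_mul_left ?_ _
  calc C ^ ((ρ-μ)/μ * (1/ρ)) ≤ C ^ (1:ℝ) := by
        refine ENNReal.rpow_le_rpow_of_exponent_le hC1 ?_
        rw [div_mul_div_comm]
        rw [div_le_one (by positivity)]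
        nlinarith
    _ = C := ENNReal.rpow_one C

lemma lemD {a : ℕ → ℝ≥0∞} {P : ℝ} (hP : 1 ≤ P)
    {Q : Set ℝ≥0∞} (hQne : Q.Nonempty) (hQ : Q ⊆ Ico 1 ∞) :
    (∑' (k : ℕ), ((k:ℝ≥0∞)+1) ^ ((sInf Q).toReal/P - 1) * a k ^ (sInf Q).toReal)
        ^ (1/(sInf Q).toReal) ≤
      ⨆ q ∈ Q, (∑' (k : ℕ), ((k:ℝ≥0∞)+1) ^ (q.toReal/P - 1) * a k ^ q.toReal)
        ^ (1/q.toReal) := by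
  obtain ⟨q0, hq0⟩ := hQne
  set m := sInf Q with hm
  have hm1 : 1 ≤ m := le_sInf fun q hq => (hQ hq).1
  have hmq0 : m ≤ q0 := sInf_le hq0
  have hmtop : m ≠ ∞ := (lt_of_le_of_lt hmq0 (hQ hq0).2).ne
  set μ := m.toReal with hμ
  have hμ1 : 1 ≤ μ := by
    rw [hμ, ← ENNReal.toReal_one]
    exact ENNReal.toReal_mono hmtop hm1
  have hμ0 : (0:ℝ) < μ := by linarith
  have hP0 : (0:ℝ) < P := by linarith
  set M := ⨆ q ∈ Q, (∑' (k : ℕ), ((k:ℝ≥0∞)+1) ^ (q.toReal/P - 1) * a k ^ q.toReal)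
        ^ (1/q.toReal) with hM
  have hqfacts : ∀ q ∈ Q, 1 ≤ q.toReal := by
    intro q hq
    rw [← ENNReal.toReal_one]
    exact ENNReal.toReal_mono (hQ hq).2.ne (hQ hq).1
  have hnormle : ∀ q ∈ Q,
      (∑' (k : ℕ), ((k:ℝ≥0∞)+1) ^ (q.toReal/P - 1) * a k ^ q.toReal) ^ (1/q.toReal) ≤ M :=
    fun q hq => le_iSup₂ (f := fun q (_ : q ∈ Q) =>
      (∑' (k : ℕ), ((k:ℝ≥0∞)+1) ^ (q.toReal/P - 1) * a k ^ q.toReal) ^ (1/q.toReal)) q hq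
  rcases eq_or_ne M ∞ with hMtop | hMne
  · exact hMtop ▸ le_top
  -- a k all finite, else M = ∞
  have hfin : ∀ k, a k ≠ ∞ := by
    intro k hk
    apply hMne
    refine top_le_iff.mp ?_
    refine le_trans ?_ (hnormle q0 hq0)
    have hq0t : (0:ℝ) < q0.toReal := by linarith [hqfacts q0 hq0]
    have hkpos : (0:ℝ≥0∞) < (k:ℝ≥0∞)+1 := lt_of_lt_of_le one_pos le_add_self
    have hct : ((k:ℝ≥0∞)+1) ≠ ∞ := ENNReal.add_ne_top.mpr ⟨ENNReal.natCast_ne_top k, ENNReal.one_ne_top⟩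
    have hterm : ((k:ℝ≥0∞)+1) ^ (q0.toReal/P - 1) * a k ^ q0.toReal = ∞ := by
      rw [hk, ENNReal.top_rpow_of_pos hq0t, ENNReal.mul_top (ENNReal.rpow_pos hkpos hct).ne']
    have : (∑' (k : ℕ), ((k:ℝ≥0∞)+1) ^ (q0.toReal/P - 1) * a k ^ q0.toReal) = ∞ :=
      top_le_iff.mp (hterm ▸ ENNReal.le_tsum k)
    rw [this, ENNReal.top_rpow_of_pos (by positivity)]
  rcases eq_or_ne M 0 with hM0 | hMne0
  · -- all a k = 0
    have hq0t : (0:ℝ) < q0.toReal := by linarith [hqfacts q0 hq0]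
    have hS0 : (∑' (k : ℕ), ((k:ℝ≥0∞)+1) ^ (q0.toReal/P - 1) * a k ^ q0.toReal) = 0 := by
      have := (hnormle q0 hq0).trans_eq hM0
      have h2 := le_antisymm this (zero_le)
      rcases ENNReal.rpow_eq_zero_iff.mp h2 with ⟨h3, _⟩ | ⟨_, h4⟩
      · exact h3
      · exfalso; have : (0:ℝ) < 1/q0.toReal := by positivity
        linarith
    have hak : ∀ k, a k = 0 := by
      intro k
      have hterm : ((k:ℝ≥0∞)+1) ^ (q0.toReal/P - 1) * a k ^ q0.toReal = 0 :=
        le_antisymm (hS0 ▸ ENNReal.le_tsum k) (zero_le)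
      have hkpos : (0:ℝ≥0∞) < (k:ℝ≥0∞)+1 := lt_of_lt_of_le one_pos le_add_self
      have hct : ((k:ℝ≥0∞)+1) ≠ ∞ := ENNReal.add_ne_top.mpr ⟨ENNReal.natCast_ne_top k, ENNReal.one_ne_top⟩
      rcases mul_eq_zero.mp hterm with h | h
      · exact absurd h (ENNReal.rpow_pos hkpos hct).ne'
      · rcases ENNReal.rpow_eq_zero_iff.mp h with ⟨h1, _⟩ | ⟨_, h2⟩
        · exact h1
        · linarith
    have : (∑' (k : ℕ), ((k:ℝ≥0∞)+1) ^ (μ/P - 1) * a k ^ μ) = 0 := by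
      simp [hak, ENNReal.zero_rpow_of_pos hμ0]
    rw [this, ENNReal.zero_rpow_of_pos (by positivity)]
    exact zero_le
  -- main case : 0 < M < ∞
  obtain ⟨u, -, hu, huQ⟩ := exists_seq_tendsto_sInf ⟨q0, hq0⟩ (OrderBot.bddBelow Q)
  rw [← hm] at hu
  set t : ℕ → ℝ := fun n => (u n).toReal with htdef
  have ht : Tendsto t atTop (nhds μ) := (ENNReal.tendsto_toReal hmtop).comp hu
  have ht1 : ∀ n, 1 ≤ t n := fun n => hqfacts _ (huQ n)
  -- S_q ≤ M ^ q.toReal for q ∈ Q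
  have hSle : ∀ n, (∑' (k : ℕ), ((k:ℝ≥0∞)+1) ^ (t n/P - 1) * a k ^ t n) ≤ M ^ t n := by
    intro n
    have h1 := hnormle (u n) (huQ n)
    have h2 := ENNReal.rpow_le_rpow h1 (le_of_lt (by linarith [ht1 n] : (0:ℝ) < t n))
    rwa [← ENNReal.rpow_mul, one_div, inv_mul_cancel₀ (by linarith [ht1 n] : t n ≠ 0),
      ENNReal.rpow_one] at h2
  -- limit of M ^ t n
  set M' := M.toReal with hM'
  have hM'pos : 0 < M' := ENNReal.toReal_pos hMne0 hMne
  have hMof : M = ENNReal.ofReal M' := (ENNReal.ofReal_toReal hMne).symm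
  have hMpow : ∀ s : ℝ, M ^ s = ENNReal.ofReal (M' ^ s) := by
    intro s
    rw [hMof, ENNReal.ofReal_rpow_of_pos hM'pos]
  have hMtend : Tendsto (fun n => M ^ t n) atTop (nhds (M ^ μ)) := by
    simp_rw [hMpow]
    exact (ENNReal.tendsto_ofReal ((Real.continuousAt_const_rpow hM'pos.ne').tendsto.comp ht))
  -- partial sums bound
  have hpartial : ∀ N : ℕ,
      (∑ k ∈ Finset.range N, ((k:ℝ≥0∞)+1) ^ (μ/P - 1) * a k ^ μ) ≤ M ^ μ := by
    intro N
    have htermtend : ∀ k : ℕ, Tendsto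
        (fun n => ((k:ℝ≥0∞)+1) ^ (t n/P - 1) * a k ^ t n) atTop
        (nhds (((k:ℝ≥0∞)+1) ^ (μ/P - 1) * a k ^ μ)) := by
      intro k
      rcases eq_or_ne (a k) 0 with hak | hak
      · simp_rw [hak]
        have hz : ∀ s : ℝ, 1 ≤ s → (0:ℝ≥0∞) ^ s = 0 :=
          fun s hs => ENNReal.zero_rpow_of_pos (by linarith)
        simp_rw [fun n => hz (t n) (ht1 n), hz μ hμ1, mul_zero]
        exact tendsto_const_nhds
      · set c := (a k).toReal with hc
        have hcpos : 0 < c := ENNReal.toReal_pos hak (hfin k)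
        have hakof : a k = ENNReal.ofReal c := (ENNReal.ofReal_toReal (hfin k)).symm
        have hform : ∀ s : ℝ, ((k:ℝ≥0∞)+1) ^ (s/P - 1) * a k ^ s =
            ENNReal.ofReal (((k:ℝ)+1) ^ (s/P - 1) * c ^ s) := by
          intro s
          rw [coe_succ_rpow, hakof, ENNReal.ofReal_rpow_of_pos hcpos,
            ← ENNReal.ofReal_mul (by positivity)]
        simp_rw [hform]
        refine ENNReal.tendsto_ofReal ?_
        have hcont1 : Tendsto (fun n => ((k:ℝ)+1) ^ (t n/P - 1)) atTop
            (nhds (((k:ℝ)+1) ^ (μ/P - 1))) := by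
          refine (Real.continuousAt_const_rpow (by positivity : ((k:ℝ)+1) ≠ 0)).tendsto.comp ?_
          exact (ht.div_const P).sub tendsto_const_nhds
        have hcont2 : Tendsto (fun n => c ^ t n) atTop (nhds (c ^ μ)) :=
          (Real.continuousAt_const_rpow hcpos.ne').tendsto.comp ht
        exact hcont1.mul hcont2
    have hsumtend : Tendsto
        (fun n => ∑ k ∈ Finset.range N, ((k:ℝ≥0∞)+1) ^ (t n/P - 1) * a k ^ t n) atTop
        (nhds (∑ k ∈ Finset.range N, ((k:ℝ≥0∞)+1) ^ (μ/P - 1) * a k ^ μ)) :=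
      tendsto_finset_sum _ fun k _ => htermtend k
    refine le_of_tendsto_of_tendsto' hsumtend hMtend fun n => ?_
    exact le_trans (ENNReal.sum_le_tsum _) (hSle n)
  -- conclude
  have hSm : (∑' (k : ℕ), ((k:ℝ≥0∞)+1) ^ (μ/P - 1) * a k ^ μ) ≤ M ^ μ := by
    rw [ENNReal.tsum_eq_iSup_nat]
    exact iSup_le hpartial
  have := ENNReal.rpow_le_rpow hSm (by positivity : (0:ℝ) ≤ 1/μ)
  rwa [← ENNReal.rpow_mul, mul_one_div, div_self (by linarith : μ ≠ 0),
    ENNReal.rpow_one] at this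

lemma S_top_of {a : ℕ → ℝ≥0∞} (k : ℕ) (hk : a k = ∞) (β : ℝ) {t : ℝ} (ht : 0 < t) :
    (∑' (j : ℕ), ((j:ℝ≥0∞)+1) ^ β * a j ^ t) = ∞ := by
  have hkpos : (0:ℝ≥0∞) < (k:ℝ≥0∞)+1 := lt_of_lt_of_le one_pos le_add_self
  have hct : ((k:ℝ≥0∞)+1) ≠ ∞ :=
    ENNReal.add_ne_top.mpr ⟨ENNReal.natCast_ne_top k, ENNReal.one_ne_top⟩
  have hterm : ((k:ℝ≥0∞)+1) ^ β * a k ^ t = ∞ := by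
    rw [hk, ENNReal.top_rpow_of_pos ht, ENNReal.mul_top (ENNReal.rpow_pos hkpos hct).ne']
  exact top_le_iff.mp (hterm ▸ ENNReal.le_tsum k)

/-- `IL_{p,Q} = ℓ_{p,m_Q}`, together with
`‖x‖_{p,m_Q} ≤ sup_{q∈Q} ‖x‖_{p,q} ≤ max{1, m_Q/p} ‖x‖_{p,m_Q}`. -/
theorem stmt17 (p : ℝ≥0∞) (hp1 : 1 ≤ p) (hp : p ≠ ∞)
    (Q : Set ℝ≥0∞) (hQne : Q.Nonempty) (hQ : Q ⊆ Ico 1 ∞) :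
    {x : ℕ → ℝ | (∀ q ∈ Q, x ∈ seqLorentz p q) ∧
        (⨆ q ∈ Q, seqLorentzNorm x p q) < ∞}
      = seqLorentz p (sInf Q) ∧
    ∀ x ∈ seqLorentz p (sInf Q),
      seqLorentzNorm x p (sInf Q) ≤ (⨆ q ∈ Q, seqLorentzNorm x p q) ∧
      (⨆ q ∈ Q, seqLorentzNorm x p q) ≤
        max 1 (sInf Q / p) * seqLorentzNorm x p (sInf Q) := by
  obtain ⟨q0, hq0⟩ := hQne
  set m := sInf Q with hm
  have hm1 : 1 ≤ m := le_sInf fun q hq => (hQ hq).1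
  have hmtop : m ≠ ∞ := (lt_of_le_of_lt (sInf_le hq0) (hQ hq0).2).ne
  set P := p.toReal with hP
  have hP1 : 1 ≤ P := by
    rw [hP, ← ENNReal.toReal_one]; exact ENNReal.toReal_mono hp hp1
  have hP0 : (0:ℝ) < P := by linarith
  set μ := m.toReal with hμ
  have hμ1 : 1 ≤ μ := by
    rw [hμ, ← ENNReal.toReal_one]; exact ENNReal.toReal_mono hmtop hm1
  have hμ0 : (0:ℝ) < μ := by linarith
  have hqt : ∀ q ∈ Q, 1 ≤ q.toReal := fun q hq => by
    rw [← ENNReal.toReal_one]; exact ENNReal.toReal_mono (hQ hq).2.ne (hQ hq).1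
  have normEq : ∀ (x : ℕ → ℝ) (q : ℝ≥0∞), q ≠ ∞ → seqLorentzNorm x p q =
      (∑' (k : ℕ), ((k:ℝ≥0∞)+1) ^ (q.toReal/P - 1) * seqRearr x k ^ q.toReal)
        ^ (1/q.toReal) := by
    intro x q hq
    rw [seqLorentzNorm, if_neg hq, ENNReal.toReal_div]
  have hsupEq : ∀ x : ℕ → ℝ, (⨆ q ∈ Q, seqLorentzNorm x p q) =
      ⨆ q ∈ Q, (∑' (k : ℕ), ((k:ℝ≥0∞)+1) ^ (q.toReal/P - 1) * seqRearr x k ^ q.toReal)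
        ^ (1/q.toReal) := by
    intro x
    exact biSup_congr fun q hq => normEq x q (hQ hq).2.ne
  -- lower inequality, for all x
  have ineq1 : ∀ x : ℕ → ℝ, seqLorentzNorm x p m ≤ ⨆ q ∈ Q, seqLorentzNorm x p q := by
    intro x
    rw [normEq x m hmtop, hsupEq x]
    exact lemD hP1 ⟨q0, hq0⟩ hQ
  -- the constant
  have hmp_ne : m / p ≠ ∞ :=
    (ENNReal.div_lt_top hmtop (fun h => by simp [h] at hp1)).ne
  have hconst : max 1 (m / p) = ENNReal.ofReal (max 1 (μ/P)) := by
    have h1 : ENNReal.ofReal (μ/P) = m / p := by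
      rw [← ENNReal.toReal_div, ENNReal.ofReal_toReal hmp_ne]
    rcases le_total 1 (μ/P) with h | h
    · rw [max_eq_right h, h1, max_eq_right]
      rw [← h1, ← ENNReal.ofReal_one]
      exact ENNReal.ofReal_le_ofReal h
    · rw [max_eq_left h, ENNReal.ofReal_one, max_eq_left]
      rw [← h1, ← ENNReal.ofReal_one]
      exact ENNReal.ofReal_le_ofReal h
  have hconst1 : (1:ℝ≥0∞) ≤ max 1 (m / p) := le_max_left _ _
  have hconst_ne : max 1 (m / p) ≠ ∞ := by
    rw [hconst]; exact ENNReal.ofReal_ne_top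
  -- upper inequality, for all x
  have ineq2 : ∀ x : ℕ → ℝ, (⨆ q ∈ Q, seqLorentzNorm x p q) ≤
      max 1 (m / p) * seqLorentzNorm x p m := by
    intro x
    by_cases hfin : ∀ k, seqRearr x k ≠ ∞
    · rw [hsupEq x, normEq x m hmtop, hconst]
      refine iSup₂_le fun q hq => ?_
      refine lemC' (seqRearr_antitone x) hfin hP1 hμ1 ?_
      exact ENNReal.toReal_mono (hQ hq).2.ne (sInf_le hq)
    · push_neg at hfin
      obtain ⟨k, hk⟩ := hfin
      have hSm : seqLorentzNorm x p m = ∞ := by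
        rw [normEq x m hmtop, S_top_of k hk _ hμ0, ENNReal.top_rpow_of_pos (by positivity)]
      rw [hSm, ENNReal.mul_top (by intro h; rw [h] at hconst1; simp at hconst1)]
      exact le_top
  refine ⟨?_, fun x _ => ⟨ineq1 x, ineq2 x⟩⟩
  ext x
  simp only [Set.mem_setOf_eq, seqLorentz]
  constructor
  · rintro ⟨hx, hsup⟩
    exact ⟨(hx q0 hq0).1, lt_of_le_of_lt (ineq1 x) hsup⟩
  · rintro ⟨htend, hnorm⟩
    have hsup_lt : (⨆ q ∈ Q, seqLorentzNorm x p q) < ∞ :=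
      lt_of_le_of_lt (ineq2 x) (ENNReal.mul_lt_top hconst_ne.lt_top hnorm)
    refine ⟨fun q hq => ⟨htend, ?_⟩, hsup_lt⟩
    exact lt_of_le_of_lt (le_iSup₂ (f := fun q (_ : q ∈ Q) => seqLorentzNorm x p q) q hq) hsup_lt
end
end

section
/- Let 1 ≤ q < ∞ and J ⊆ [1,∞) nonempty with m_J = inf J. Then IL_{J,q} ⊆ ℓ_{m_J,q}, where IL_{J,q} = {(x_i) ∈ ⋂_{p∈J} ℓ_{p,q} : sup_{p∈J} ‖(x_i)‖_{p,q} < ∞}; moreover, for every (x_i) ∈ IL_{J,q}, ‖(x_i)‖_{m_J,q} ≤ sup_{p∈J} ‖(x_i)‖_{p,q}. -/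
open Set ENNReal Filter
open scoped Topology

noncomputable section

/-- `IL_{J,q} ⊆ ℓ_{m_J,q}`, with `‖x‖_{m_J,q} ≤ sup_{p∈J} ‖x‖_{p,q}`. -/
theorem stmt18 (q : ℝ≥0∞) (hq1 : 1 ≤ q) (hq : q ≠ ∞)
    (J : Set ℝ≥0∞) (hJne : J.Nonempty) (hJ : J ⊆ Ico 1 ∞) :
    {x : ℕ → ℝ | (∀ p ∈ J, x ∈ seqLorentz p q) ∧
        (⨆ p ∈ J, seqLorentzNorm x p q) < ∞}
      ⊆ seqLorentz (sInf J) q ∧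
    ∀ x ∈ {x : ℕ → ℝ | (∀ p ∈ J, x ∈ seqLorentz p q) ∧
        (⨆ p ∈ J, seqLorentzNorm x p q) < ∞},
      seqLorentzNorm x (sInf J) q ≤ ⨆ p ∈ J, seqLorentzNorm x p q := by
  obtain ⟨p₀, hp₀⟩ := hJne
  have hm0 : sInf J ≠ 0 := by
    have h1 : (1 : ℝ≥0∞) ≤ sInf J := le_sInf fun p hp => (hJ hp).1
    intro h; rw [h] at h1; exact (not_le.mpr zero_lt_one) h1
  obtain ⟨u, hu_anti, hu_tend, hu_mem⟩ :=
    exists_seq_tendsto_sInf ⟨p₀, hp₀⟩ (OrderBot.bddBelow J)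
  have hun0 : ∀ n, u n ≠ 0 := by
    intro n h
    have h1 := (hJ (hu_mem n)).1
    rw [h] at h1; exact (not_le.mpr zero_lt_one) h1
  have hdiv_ne_top : ∀ n, q / u n ≠ ∞ := fun n => (ENNReal.div_lt_top hq (hun0 n)).ne
  have hdivm_ne_top : q / sInf J ≠ ∞ := (ENNReal.div_lt_top hq hm0).ne
  -- the key inequality, which holds for every `x`
  have key : ∀ x : ℕ → ℝ,
      seqLorentzNorm x (sInf J) q ≤ ⨆ p ∈ J, seqLorentzNorm x p q := by
    intro x
    set f : ℕ → ℕ → ℝ≥0∞ := fun n k =>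
      ((k : ℝ≥0∞) + 1) ^ ((q / u n).toReal - 1) * seqRearr x k ^ q.toReal with hf
    have hbase1 : ∀ k : ℕ, (1 : ℝ≥0∞) ≤ (k : ℝ≥0∞) + 1 := fun k => le_add_self
    -- monotonicity in `n`
    have hmono : Monotone f := by
      intro a b hab k
      refine mul_le_mul_left (ENNReal.rpow_le_rpow_of_exponent_le (hbase1 k) ?_) _
      have h1 : q / u a ≤ q / u b := ENNReal.div_le_div_left (hu_anti hab) q
      exact sub_le_sub_right (ENNReal.toReal_mono (hdiv_ne_top b) h1) 1
    -- pointwise convergence to the terms at `sInf J`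
    have htend : ∀ k, Tendsto (fun n => f n k) atTop
        (𝓝 (((k : ℝ≥0∞) + 1) ^ ((q / sInf J).toReal - 1) * seqRearr x k ^ q.toReal)) := by
      intro k
      have he : Tendsto (fun n => (q / u n).toReal - 1) atTop
          (𝓝 ((q / sInf J).toReal - 1)) :=
        ((ENNReal.tendsto_toReal hdivm_ne_top).comp
          (ENNReal.Tendsto.const_div hu_tend (Or.inr hq))).sub_const 1
      have hpos : (0 : ℝ) < (k : ℝ) + 1 := by positivity
      have hb : ((k : ℝ≥0∞) + 1) = ENNReal.ofReal ((k : ℝ) + 1) := by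
        rw [ENNReal.ofReal_add (Nat.cast_nonneg k) zero_le_one, ENNReal.ofReal_natCast,
          ENNReal.ofReal_one]
      have hrw : ∀ r : ℝ, ((k : ℝ≥0∞) + 1) ^ r = ENNReal.ofReal (((k : ℝ) + 1) ^ r) := by
        intro r; rw [hb, ENNReal.ofReal_rpow_of_pos hpos]
      have hbt : Tendsto (fun n => ((k : ℝ≥0∞) + 1) ^ ((q / u n).toReal - 1)) atTop
          (𝓝 (((k : ℝ≥0∞) + 1) ^ ((q / sInf J).toReal - 1))) := by
        simp_rw [hrw]
        exact (ENNReal.continuous_ofReal.tendsto _).comp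
          ((Real.continuousAt_const_rpow hpos.ne').tendsto.comp he)
      have hne : (((k : ℝ≥0∞) + 1) ^ ((q / sInf J).toReal - 1)) ≠ 0 :=
        (ENNReal.rpow_pos (lt_of_lt_of_le zero_lt_one (hbase1 k))
          (by simp [ENNReal.add_ne_top])).ne'
      exact ENNReal.Tendsto.mul_const hbt (Or.inl hne)
    have hsup : ∀ k : ℕ, ((k : ℝ≥0∞) + 1) ^ ((q / sInf J).toReal - 1) * seqRearr x k ^ q.toReal
        = ⨆ n, f n k :=
      fun k => (iSup_eq_of_tendsto (fun a b hab => hmono hab k) (htend k)).symm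
    -- exchange tsum and monotone sup
    have hts : (∑' k : ℕ, ((k : ℝ≥0∞) + 1) ^ ((q / sInf J).toReal - 1)
          * seqRearr x k ^ q.toReal) = ⨆ n, ∑' k, f n k := by
      simp_rw [hsup]
      rw [← MeasureTheory.lintegral_count,
        MeasureTheory.lintegral_iSup (fun n => measurable_of_countable _) hmono]
      simp_rw [MeasureTheory.lintegral_count]
    have hS_mono : Monotone (fun n => ∑' k, f n k) := fun a b hab =>
      ENNReal.tsum_le_tsum fun k => hmono hab k
    have hnorm : ∀ n, (∑' k, f n k) ^ (1 / q.toReal) = seqLorentzNorm x (u n) q := by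
      intro n; simp only [seqLorentzNorm, if_neg hq, hf]
    have hnormInf : seqLorentzNorm x (sInf J) q = (⨆ n, ∑' k, f n k) ^ (1 / q.toReal) := by
      simp only [seqLorentzNorm, if_neg hq]
      rw [hts]
    rw [hnormInf]
    refine le_of_tendsto ((tendsto_atTop_iSup hS_mono).ennrpow_const (1 / q.toReal))
      (Eventually.of_forall fun n => ?_)
    rw [hnorm n]
    exact le_iSup₂ (f := fun p (_ : p ∈ J) => seqLorentzNorm x p q) (u n) (hu_mem n)
  constructor
  · intro x hx
    exact ⟨(hx.1 p₀ hp₀).1, lt_of_le_of_lt (key x) hx.2⟩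
  · intro x _
    exact key x
end
end
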